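/- arXiv:1801.07412 — 4 statements merged into one kernel-verified Lean document; each statement's English description precedes it below -/
import Mathlib

section
/- Let n ≥ 2 and 1 ≤ m ≤ n−1 be integers, let i ∈ V = {1,…,n} and let N ⊆ V \ {i} with |N| = m, and let L = L_{i,N} be the star Laplacian. Then for every real T ≥ 0 the entries of the matrix exponential exp(−T L) are: (exp(−TL))_{ii} = (1 + m e^{−(m+1)T})/(m+1); (exp(−TL))_{ij} = (exp(−TL))_{ji} = (1 − e^{−(m+1)T})/(m+1) for every j ∈ N; (exp(−TL))_{jj} = e^{−T} + (m + e^{−(m+1)T} − (m+1)e^{−T})/(m(m+1)) for every j ∈ N; (exp(−TL))_{jj'} = (m + e^{−(m+1)T} − (m+1)e^{−T})/(m(m+1)) for all distinct j, j' ∈ N; (exp(−TL))_{kk} = 1 for every k ∉ {i} ∪ N; and all remaining entries are zero. -/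
open Matrix MeasureTheory ProbabilityTheory

/-- Measurable space structure on matrices (entrywise/pi structure). -/
instance matMS (n : ℕ) : MeasurableSpace (Matrix (Fin n) (Fin n) ℝ) := MeasurableSpace.pi

/-- The discrete measurable space structure on finite sets of nodes. -/
instance finsetMS (n : ℕ) : MeasurableSpace (Finset (Fin n)) := ⊤

/-- The star Laplacian `L_{i,N}`: the Laplacian of the graph on `Fin n` whose edge set is
`{{i,j} : j ∈ N}`, where `m = |N|`.  Its entries are `(L)_{ii} = m`, `(L)_{jj} = 1` and
`(L)_{ij} = (L)_{ji} = -1` for `j ∈ N`, and `0` otherwise. -/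
noncomputable def starLap (n m : ℕ) (i : Fin n) (N : Finset (Fin n)) :
    Matrix (Fin n) (Fin n) ℝ :=
  Matrix.of fun k l =>
    if k = i ∧ l = i then (m : ℝ)
    else if k = i ∧ l ∈ N then -1
    else if l = i ∧ k ∈ N then -1
    else if k = l ∧ k ∈ N then 1
    else 0

/-- The matrix `M_i(T)`. -/
noncomputable def Mmat (n m : ℕ) (i : Fin n) (T : ℝ) : Matrix (Fin n) (Fin n) ℝ :=
  Matrix.of fun k l =>
    if k = i ∧ l = i then (1 + m * Real.exp (-((m : ℝ) + 1) * T)) / ((m : ℝ) + 1)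
    else if k = l then
      1 + (((m : ℝ) ^ 2 - 1) * Real.exp (-T) + Real.exp (-((m : ℝ) + 1) * T) - (m : ℝ) ^ 2) /
        (((m : ℝ) + 1) * ((n : ℝ) - 1))
    else if k = i ∨ l = i then
      (m : ℝ) * (1 - Real.exp (-((m : ℝ) + 1) * T)) / (((m : ℝ) + 1) * ((n : ℝ) - 1))
    else
      ((m : ℝ) - 1) * ((m : ℝ) + Real.exp (-((m : ℝ) + 1) * T) - ((m : ℝ) + 1) * Real.exp (-T)) /
        (((m : ℝ) + 1) * ((n : ℝ) - 1) * ((n : ℝ) - 2))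

/-- A graph Laplacian on `n` nodes: a real symmetric matrix with nonpositive off-diagonal
entries and all row sums equal to zero. -/
def IsGraphLaplacian {n : ℕ} (L : Matrix (Fin n) (Fin n) ℝ) : Prop :=
  L.IsSymm ∧ (∀ k l, k ≠ l → L k l ≤ 0) ∧ (∀ k, ∑ l, L k l = 0)

/-- The eigenvalues of a real symmetric matrix sorted in nondecreasing order (`0`-indexed):
`sortedEig A (k-1)` is `λ_k(A)` in the notation `λ_1(A) ≤ ⋯ ≤ λ_n(A)`. -/
noncomputable def sortedEig {n : ℕ} (A : Matrix (Fin n) (Fin n) ℝ) (k : ℕ) : ℝ :=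
  if hA : A.IsHermitian then ((Finset.univ.val.map hA.eigenvalues).sort (· ≤ ·)).getD k 0
  else 0

/-- The orthogonal projection `Π = I - (1/n) J` of `ℝⁿ` onto the hyperplane orthogonal to
the all-ones vector. -/
noncomputable def projMat (n : ℕ) : Matrix (Fin n) (Fin n) ℝ :=
  1 - (n : ℝ)⁻¹ • Matrix.of (fun _ _ => (1 : ℝ))

/-- The Euclidean norm of a vector in `ℝⁿ`. -/
noncomputable def eucNorm {n : ℕ} (x : Fin n → ℝ) : ℝ :=
  ‖(WithLp.equiv 2 (Fin n → ℝ)).symm x‖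

/-- The operator norm of an `n × n` real matrix induced by the Euclidean norm. -/
noncomputable def opNorm {n : ℕ} (A : Matrix (Fin n) (Fin n) ℝ) : ℝ :=
  ‖Matrix.toEuclideanCLM (𝕜 := ℝ) A‖

section AuxExpIdem

lemma exp_smul_of_idem' {𝔸 : Type*} [NormedRing 𝔸] [NormedAlgebra ℝ 𝔸] [CompleteSpace 𝔸]
    (c : ℝ) (P : 𝔸) (hP : P * P = P) :
    NormedSpace.exp (c • P) = 1 + (Real.exp c - 1) • P := by
  have hpow : ∀ k : ℕ, P ^ (k + 1) = P := fun k => IsIdempotentElem.pow_succ_eq k hP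
  have hsum : Summable fun k : ℕ => ((k.factorial : ℝ))⁻¹ • (c • P) ^ k :=
    NormedSpace.expSeries_summable' (𝕂 := ℝ) (c • P)
  have hs1 : Summable fun k : ℕ => c ^ (k + 1) / (k + 1).factorial :=
    (summable_nat_add_iff 1).2 (Real.summable_pow_div_factorial c)
  have hscal : ∑' k : ℕ, c ^ (k + 1) / (k + 1).factorial = Real.exp c - 1 := by
    have h2 : Real.exp c = ∑' k : ℕ, c ^ k / k.factorial := by
      rw [Real.exp_eq_exp_ℝ, NormedSpace.exp_eq_tsum_div]
    rw [h2, Summable.tsum_eq_zero_add (Real.summable_pow_div_factorial c)]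
    simp
  simp only [NormedSpace.exp_eq_tsum (𝕂 := ℝ)]
  rw [Summable.tsum_eq_zero_add hsum]
  have : ∀ k : ℕ, (((k + 1).factorial : ℝ))⁻¹ • (c • P) ^ (k + 1)
      = (c ^ (k + 1) / (k + 1).factorial) • P := by
    intro k
    rw [smul_pow, hpow, smul_smul]
    congr 1
    field_simp
  simp only [this, pow_zero, Nat.factorial_zero, Nat.cast_one, inv_one, one_smul]
  rw [Summable.tsum_smul_const hs1, hscal]

lemma matrix_exp_smul_of_idem {n : ℕ} (c : ℝ) (P : Matrix (Fin n) (Fin n) ℝ)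
    (hP : P * P = P) :
    NormedSpace.exp (c • P) = 1 + (Real.exp c - 1) • P := by
  letI : SeminormedRing (Matrix (Fin n) (Fin n) ℝ) := Matrix.linftyOpSemiNormedRing
  letI : NormedRing (Matrix (Fin n) (Fin n) ℝ) := Matrix.linftyOpNormedRing
  letI : NormedAlgebra ℝ (Matrix (Fin n) (Fin n) ℝ) := Matrix.linftyOpNormedAlgebra
  exact exp_smul_of_idem' c P hP

lemma vecMulVec_mul_vecMulVec' {n : ℕ} (a b c d : Fin n → ℝ) :
    vecMulVec a b * vecMulVec c d = (b ⬝ᵥ c) • vecMulVec a d := by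
  ext k l
  simp only [mul_apply, vecMulVec_apply, Matrix.smul_apply, smul_eq_mul, dotProduct]
  rw [Finset.sum_mul]
  exact Finset.sum_congr rfl fun p _ => by ring

end AuxExpIdem

set_option maxHeartbeats 4000000 in
/-- Explicit entries of the matrix exponential `exp(-T L_{i,N})` of the
star Laplacian. -/
theorem starLap_exp_entries (n m : ℕ) (hn : 2 ≤ n) (hm1 : 1 ≤ m) (hm2 : m ≤ n - 1)
    (i : Fin n) (N : Finset (Fin n)) (hiN : i ∉ N) (hcard : N.card = m)
    (T : ℝ) (hT : 0 ≤ T)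
    (E : Matrix (Fin n) (Fin n) ℝ) (hE : E = NormedSpace.exp (-T • starLap n m i N)) :
    (E i i = (1 + m * Real.exp (-((m : ℝ) + 1) * T)) / ((m : ℝ) + 1)) ∧
    (∀ j ∈ N, E i j = (1 - Real.exp (-((m : ℝ) + 1) * T)) / ((m : ℝ) + 1) ∧
      E j i = (1 - Real.exp (-((m : ℝ) + 1) * T)) / ((m : ℝ) + 1)) ∧
    (∀ j ∈ N, E j j = Real.exp (-T) +
      ((m : ℝ) + Real.exp (-((m : ℝ) + 1) * T) - ((m : ℝ) + 1) * Real.exp (-T)) /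
        ((m : ℝ) * ((m : ℝ) + 1))) ∧
    (∀ j ∈ N, ∀ j' ∈ N, j ≠ j' →
      E j j' = ((m : ℝ) + Real.exp (-((m : ℝ) + 1) * T) - ((m : ℝ) + 1) * Real.exp (-T)) /
        ((m : ℝ) * ((m : ℝ) + 1))) ∧
    (∀ p : Fin n, p ≠ i → p ∉ N → E p p = 1) ∧
    (∀ p q : Fin n, p ≠ q → (p ≠ i ∧ p ∉ N) ∨ (q ≠ i ∧ q ∉ N) → E p q = 0) := by
  have him : ∀ j ∈ N, j ≠ i := fun j hj h => hiN (h ▸ hj)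
  have hm0 : (m : ℝ) ≠ 0 := Nat.cast_ne_zero.2 (by omega)
  have hmp : ((m : ℝ) + 1) ≠ 0 := by positivity
  set w : Fin n → ℝ := fun k => if k ∈ N then 1 else 0 with hw
  set v : Fin n → ℝ := fun k => if k = i then (m : ℝ) else if k ∈ N then -1 else 0 with hv
  set W := vecMulVec w w with hWdef
  set V := vecMulVec v v with hVdef
  set P1 := Matrix.diagonal w - (m : ℝ)⁻¹ • W with hP1def
  set P2 := ((m : ℝ) * ((m : ℝ) + 1))⁻¹ • V with hP2def
  -- dot products
  have hww : w ⬝ᵥ w = (m : ℝ) := by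
    rw [dotProduct]
    rw [Finset.sum_congr rfl (fun k _ => show w k * w k = if k ∈ N then (1:ℝ) else 0 from by
      by_cases h : k ∈ N <;> simp [hw, h])]
    rw [Finset.sum_ite_mem, Finset.univ_inter, Finset.sum_const, hcard]
    simp
  have hNsub : N ⊆ Finset.univ.erase i := fun j hj => Finset.mem_erase.2 ⟨him j hj, Finset.mem_univ j⟩
  have hvv : v ⬝ᵥ v = (m : ℝ) * ((m : ℝ) + 1) := by
    rw [dotProduct, ← Finset.add_sum_erase Finset.univ _ (Finset.mem_univ i)]
    have h1 : v i * v i = (m : ℝ) * (m : ℝ) := by simp [hv]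
    have h2 : ∑ k ∈ Finset.univ.erase i, v k * v k
        = ∑ k ∈ Finset.univ.erase i, (if k ∈ N then (1:ℝ) else 0) := by
      refine Finset.sum_congr rfl fun k hk => ?_
      have hki : k ≠ i := (Finset.mem_erase.1 hk).1
      by_cases h : k ∈ N <;> simp [hv, hki, h]
    rw [h1, h2, Finset.sum_ite_mem, Finset.inter_eq_right.2 hNsub, Finset.sum_const, hcard]
    simp
    ring
  have hwv : w ⬝ᵥ v = -(m : ℝ) := by
    rw [dotProduct]
    rw [Finset.sum_congr rfl (fun k _ => show w k * v k = if k ∈ N then (-1:ℝ) else 0 from by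
      by_cases h : k ∈ N
      · simp [hw, hv, h, him k h]
      · simp [hw, h])]
    rw [Finset.sum_ite_mem, Finset.univ_inter, Finset.sum_const, hcard]
    simp
  have hvw : v ⬝ᵥ w = -(m : ℝ) := by
    rw [dotProduct]
    rw [Finset.sum_congr rfl (fun k _ => show v k * w k = if k ∈ N then (-1:ℝ) else 0 from by
      by_cases h : k ∈ N
      · simp [hw, hv, h, him k h]
      · simp [hw, h])]
    rw [Finset.sum_ite_mem, Finset.univ_inter, Finset.sum_const, hcard]
    simp
  -- structural products
  have hdWl : Matrix.diagonal w * W = W := by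
    ext k l
    rw [Matrix.diagonal_mul, hWdef, vecMulVec_apply]
    by_cases h : k ∈ N <;> simp [hw, h]
  have hdWr : W * Matrix.diagonal w = W := by
    ext k l
    rw [Matrix.mul_diagonal, hWdef, vecMulVec_apply]
    by_cases h : l ∈ N <;> simp [hw, h]
  have hwid : ∀ k, w k * w k = w k := fun k => by by_cases h : k ∈ N <;> simp [hw, h]
  have hdd : Matrix.diagonal w * Matrix.diagonal w = Matrix.diagonal w := by
    rw [Matrix.diagonal_mul_diagonal]
    exact congrArg Matrix.diagonal (funext hwid)
  have hWW : W * W = (m : ℝ) • W := by rw [hWdef, vecMulVec_mul_vecMulVec', hww]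
  have hVV : V * V = ((m : ℝ) * ((m : ℝ) + 1)) • V := by
    rw [hVdef, vecMulVec_mul_vecMulVec', hvv]
  have hdV : Matrix.diagonal w * V = -vecMulVec w v := by
    ext k l
    rw [Matrix.diagonal_mul, hVdef, vecMulVec_apply, Matrix.neg_apply, vecMulVec_apply]
    by_cases h : k ∈ N
    · have h1 : w k = 1 := by simp [hw, h]
      have h2 : v k = -1 := by simp [hv, h, him k h]
      rw [h1, h2]; ring
    · have h1 : w k = 0 := by simp [hw, h]
      rw [h1]; ring
  have hVd : V * Matrix.diagonal w = -vecMulVec v w := by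
    ext k l
    rw [Matrix.mul_diagonal, hVdef, vecMulVec_apply, Matrix.neg_apply, vecMulVec_apply]
    by_cases h : l ∈ N
    · have h1 : w l = 1 := by simp [hw, h]
      have h2 : v l = -1 := by simp [hv, h, him l h]
      rw [h1, h2]; ring
    · have h1 : w l = 0 := by simp [hw, h]
      rw [h1]; ring
  have hWV : W * V = (-(m : ℝ)) • vecMulVec w v := by
    rw [hWdef, hVdef, vecMulVec_mul_vecMulVec', hwv]
  have hVW : V * W = (-(m : ℝ)) • vecMulVec v w := by
    rw [hVdef, hWdef, vecMulVec_mul_vecMulVec', hvw]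
  -- idempotence and orthogonality
  have hP1P1 : P1 * P1 = P1 := by
    have h1 : ((m : ℝ)⁻¹ • W) * ((m : ℝ)⁻¹ • W) = (m : ℝ)⁻¹ • W := by
      rw [smul_mul_assoc, mul_smul_comm, hWW, smul_smul, smul_smul]
      congr 1
      field_simp
    have h2 : ((m : ℝ)⁻¹ • W) * Matrix.diagonal w = (m : ℝ)⁻¹ • W := by
      rw [smul_mul_assoc, hdWr]
    have h3 : Matrix.diagonal w * ((m : ℝ)⁻¹ • W) = (m : ℝ)⁻¹ • W := by
      rw [mul_smul_comm, hdWl]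
    rw [hP1def, sub_mul, mul_sub, mul_sub, hdd, h3, h2, h1]
    abel
  have hP2P2 : P2 * P2 = P2 := by
    rw [hP2def, smul_mul_assoc, mul_smul_comm, hVV, smul_smul, smul_smul]
    congr 1
    field_simp
  have hP1P2 : P1 * P2 = 0 := by
    rw [hP1def, hP2def, sub_mul, mul_smul_comm, hdV, smul_mul_assoc, mul_smul_comm, hWV]
    rw [smul_neg, ← neg_smul, smul_smul, smul_smul, ← sub_smul]
    refine smul_eq_zero_of_left ?_ _
    field_simp
    ring
  have hP2P1 : P2 * P1 = 0 := by
    rw [hP1def, hP2def, mul_sub, smul_mul_assoc, hVd, mul_smul_comm, smul_mul_assoc, hVW]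
    rw [smul_neg, ← neg_smul, smul_smul, smul_smul, ← sub_smul]
    refine smul_eq_zero_of_left ?_ _
    field_simp
    ring
  -- spectral decomposition of the Laplacian
  have hLP : starLap n m i N = P1 + ((m : ℝ) + 1) • P2 := by
    rw [hP1def, hP2def, hWdef, hVdef]
    ext k l
    simp only [starLap, Matrix.of_apply, Matrix.add_apply, Matrix.sub_apply, Matrix.smul_apply,
      Matrix.diagonal_apply, vecMulVec_apply, smul_eq_mul, hw, hv]
    by_cases hk : k = i <;> by_cases hl : l = i <;>
      by_cases hkN : k ∈ N <;> by_cases hlN : l ∈ N <;>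
        by_cases hkl : k = l <;>
          simp_all <;> field_simp <;> ring
  -- assemble the exponential
  have hsplit : -T • starLap n m i N = (-T) • P1 + (-((m : ℝ) + 1) * T) • P2 := by
    rw [hLP, smul_add, smul_smul]
    congr 2
    ring
  have hcomm : Commute ((-T) • P1) ((-((m : ℝ) + 1) * T) • P2) := by
    show _ = _
    rw [smul_mul_assoc, mul_smul_comm, hP1P2, smul_mul_assoc, mul_smul_comm, hP2P1]
    simp
  have hEform : E = 1 + (Real.exp (-T) - 1) • P1 + (Real.exp (-((m : ℝ) + 1) * T) - 1) • P2 := by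
    rw [hE, hsplit, Matrix.exp_add_of_commute _ _ hcomm,
      matrix_exp_smul_of_idem _ _ hP1P1, matrix_exp_smul_of_idem _ _ hP2P2]
    rw [mul_add, mul_one, add_mul, one_mul, smul_mul_assoc, mul_smul_comm, hP1P2]
    simp [add_assoc]
  set a := Real.exp (-T) - 1 with ha
  set b := Real.exp (-((m : ℝ) + 1) * T) - 1 with hb
  have hEapp : ∀ k l, E k l = (if k = l then (1:ℝ) else 0)
      + a * ((if k = l then w k else 0) - (m : ℝ)⁻¹ * (w k * w l))
      + b * (((m : ℝ) * ((m : ℝ) + 1))⁻¹ * (v k * v l)) := by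
    intro k l
    rw [hEform, hP1def, hP2def, hWdef, hVdef]
    simp [Matrix.add_apply, Matrix.smul_apply, Matrix.one_apply, Matrix.sub_apply,
      Matrix.diagonal_apply, vecMulVec_apply, mul_comm]
  have hexp : Real.exp (-((m : ℝ) + 1) * T) = b + 1 := by rw [hb]; ring
  have hexpT : Real.exp (-T) = a + 1 := by rw [ha]; ring
  refine ⟨?_, ?_, ?_, ?_, ?_, ?_⟩
  · rw [hEapp i i, hexp]
    simp [hw, hv, hiN]
    field_simp
    ring
  · intro j hj
    have hji : j ≠ i := him j hj
    constructor
    · rw [hEapp i j, hexp]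
      simp [hw, hv, hiN, hj, hji.symm, hji]
      field_simp
    · rw [hEapp j i, hexp]
      simp [hw, hv, hiN, hj, hji.symm, hji]
      field_simp
  · intro j hj
    have hji : j ≠ i := him j hj
    rw [hEapp j j, hexp, hexpT]
    simp [hw, hv, hj, hji]
    field_simp
    ring
  · intro j hj j' hj' hne
    have hji : j ≠ i := him j hj
    have hji' : j' ≠ i := him j' hj'
    rw [hEapp j j', hexp, hexpT]
    simp [hw, hv, hj, hj', hji, hji', hne]
    field_simp
    ring
  · intro p hpi hpN
    rw [hEapp p p]
    simp [hw, hv, hpi, hpN]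
  · intro p q hpq h
    rw [hEapp p q]
    rcases h with ⟨hpi, hpN⟩ | ⟨hqi, hqN⟩
    · simp [hw, hv, hpi, hpN, hpq]
    · simp [hw, hv, hqi, hqN, hpq]
end

section
/- Let n ≥ 3 and 1 ≤ m ≤ n−1 be integers, let i ∈ V = {1,…,n}, and let T > 0. Then the average of the matrix exponentials exp(−T L_{i,N}) over all m-element subsets N of V \ {i}, namely (1/C(n−1,m)) · Σ_{N ⊆ V\{i}, |N|=m} exp(−T L_{i,N}), equals the matrix M_i(T). -/
open Matrix MeasureTheory ProbabilityTheory

open Matrix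
noncomputable section

def uf {n : ℕ} (i : Fin n) (N : Finset (Fin n)) (k : Fin n) : ℝ :=
  if k = i then 1 else if k ∈ N then 1 else 0

def vf {n : ℕ} (m : ℕ) (i : Fin n) (N : Finset (Fin n)) (k : Fin n) : ℝ :=
  if k = i then (m : ℝ) else if k ∈ N then -1 else 0

lemma vecMulVec_mul_vecMulVec {n : ℕ} (x y z w : Fin n → ℝ) :
    vecMulVec x y * vecMulVec z w = (y ⬝ᵥ z) • vecMulVec x w := by
  ext k l
  simp only [Matrix.mul_apply, vecMulVec_apply, Matrix.smul_apply, dotProduct, smul_eq_mul,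
    Finset.sum_mul]
  exact Finset.sum_congr rfl fun j _ => by ring

lemma diagonal_mul_vecMulVec {n : ℕ} (d x y : Fin n → ℝ) :
    diagonal d * vecMulVec x y = vecMulVec (fun k => d k * x k) y := by
  ext k l
  simp [Matrix.diagonal_mul, vecMulVec_apply, mul_assoc]

lemma vecMulVec_mul_diagonal {n : ℕ} (d x y : Fin n → ℝ) :
    vecMulVec x y * diagonal d = vecMulVec x (fun k => y k * d k) := by
  ext k l
  simp [Matrix.mul_diagonal, vecMulVec_apply, mul_assoc]

section dots
variable {n m : ℕ} {i : Fin n} {N : Finset (Fin n)}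

lemma sum_helper (hiN : i ∉ N) (A B : ℝ) :
    ∑ k : Fin n, (if k = i then A else if k ∈ N then B else 0) = A + N.card * B := by
  rw [← Finset.add_sum_erase _ _ (Finset.mem_univ i)]
  simp only [if_pos rfl]
  congr 1
  rw [Finset.sum_ite_of_false, Finset.sum_ite_mem]
  · rw [Finset.inter_comm, Finset.inter_eq_left.mpr, Finset.sum_const, nsmul_eq_mul]
    intro x hx
    exact Finset.mem_erase.mpr ⟨fun h => hiN (h ▸ hx), Finset.mem_univ x⟩
  · intro x hx
    exact (Finset.mem_erase.mp hx).1

lemma uf_mul_uf (k : Fin n) : uf i N k * uf i N k = uf i N k := by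
  unfold uf; split_ifs <;> ring

lemma uf_mul_vf (k : Fin n) : uf i N k * vf m i N k = vf m i N k := by
  unfold uf vf; split_ifs <;> ring

lemma dot_uu (hiN : i ∉ N) (hc : N.card = m) : uf i N ⬝ᵥ uf i N = (m : ℝ) + 1 := by
  simp only [dotProduct, uf_mul_uf]
  simp only [uf]
  rw [sum_helper hiN, hc]; ring

lemma dot_uv (hiN : i ∉ N) (hc : N.card = m) : uf i N ⬝ᵥ vf m i N = 0 := by
  simp only [dotProduct, uf_mul_vf]
  simp only [vf]
  rw [sum_helper hiN, hc]; ring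

lemma dot_vv (hiN : i ∉ N) (hc : N.card = m) : vf m i N ⬝ᵥ vf m i N = (m : ℝ) * ((m : ℝ) + 1) := by
  have : ∀ k, vf m i N k * vf m i N k = if k = i then ((m:ℝ)*m) else if k ∈ N then 1 else 0 := by
    intro k; unfold vf; split_ifs <;> ring
  simp only [dotProduct, this]
  rw [sum_helper hiN, hc]; ring

end dots

section proj
variable (n m : ℕ) (i : Fin n) (N : Finset (Fin n))

def Dmat : Matrix (Fin n) (Fin n) ℝ := diagonal (uf i N)
def Wu : Matrix (Fin n) (Fin n) ℝ := vecMulVec (uf i N) (uf i N)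
def Wv : Matrix (Fin n) (Fin n) ℝ := vecMulVec (vf m i N) (vf m i N)

def P1mat : Matrix (Fin n) (Fin n) ℝ :=
  Dmat n i N - ((m:ℝ)+1)⁻¹ • Wu n i N - ((m:ℝ)*((m:ℝ)+1))⁻¹ • Wv n m i N
def Pvmat : Matrix (Fin n) (Fin n) ℝ := ((m:ℝ)*((m:ℝ)+1))⁻¹ • Wv n m i N

variable {n m i N}
variable (hiN : i ∉ N) (hc : N.card = m) (hm1 : 1 ≤ m)

lemma DWu : Dmat n i N * Wu n i N = Wu n i N := by
  rw [Dmat, Wu, diagonal_mul_vecMulVec,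
    show (fun k => uf i N k * uf i N k) = uf i N from funext fun k => uf_mul_uf k]

lemma WuD : Wu n i N * Dmat n i N = Wu n i N := by
  rw [Dmat, Wu, vecMulVec_mul_diagonal,
    show (fun k => uf i N k * uf i N k) = uf i N from funext fun k => uf_mul_uf k]

lemma DWv : Dmat n i N * Wv n m i N = Wv n m i N := by
  rw [Dmat, Wv, diagonal_mul_vecMulVec,
    show (fun k => uf i N k * vf m i N k) = vf m i N from funext fun k => uf_mul_vf k]

lemma WvD : Wv n m i N * Dmat n i N = Wv n m i N := by
  rw [Dmat, Wv, vecMulVec_mul_diagonal,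
    show (fun k => vf m i N k * uf i N k) = vf m i N from
      funext fun k => by rw [mul_comm]; exact uf_mul_vf k]

lemma DD : Dmat n i N * Dmat n i N = Dmat n i N := by
  rw [Dmat, diagonal_mul_diagonal,
    show (fun k => uf i N k * uf i N k) = uf i N from funext fun k => uf_mul_uf k]

include hiN hc in
lemma WuWu : Wu n i N * Wu n i N = ((m:ℝ)+1) • Wu n i N := by
  rw [Wu, vecMulVec_mul_vecMulVec, dot_uu hiN hc]

include hiN hc in
lemma WuWv : Wu n i N * Wv n m i N = 0 := by
  rw [Wu, Wv, vecMulVec_mul_vecMulVec, dot_uv hiN hc, zero_smul]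

include hiN hc in
lemma WvWu : Wv n m i N * Wu n i N = 0 := by
  rw [Wu, Wv, vecMulVec_mul_vecMulVec]
  have : vf m i N ⬝ᵥ uf i N = 0 := by
    rw [dotProduct_comm]; exact dot_uv hiN hc
  rw [this, zero_smul]

include hiN hc in
lemma WvWv : Wv n m i N * Wv n m i N = ((m:ℝ)*((m:ℝ)+1)) • Wv n m i N := by
  rw [Wv, vecMulVec_mul_vecMulVec, dot_vv hiN hc]

include hiN hc hm1 in
lemma P1P1 : P1mat n m i N * P1mat n m i N = P1mat n m i N := by
  have hm0 : (m:ℝ) ≠ 0 := Nat.cast_ne_zero.mpr (by omega)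
  have hm1' : (m:ℝ)+1 ≠ 0 := by positivity
  rw [P1mat]
  simp only [sub_mul, mul_sub, Matrix.smul_mul, Matrix.mul_smul, smul_smul]
  rw [DD, DWu, WuD, DWv, WvD, WuWu hiN hc, WuWv hiN hc, WvWu hiN hc, WvWv hiN hc]
  simp only [smul_zero, sub_zero]
  match_scalars <;> field_simp <;> ring

include hiN hc hm1 in
lemma PvPv : Pvmat n m i N * Pvmat n m i N = Pvmat n m i N := by
  have hm0 : (m:ℝ) ≠ 0 := Nat.cast_ne_zero.mpr (by omega)
  have hm1' : (m:ℝ)+1 ≠ 0 := by positivity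
  rw [Pvmat, Matrix.smul_mul, Matrix.mul_smul, WvWv hiN hc, smul_smul, smul_smul]
  congr 1
  field_simp

include hiN hc hm1 in
lemma P1Pv : P1mat n m i N * Pvmat n m i N = 0 := by
  have hm0 : (m:ℝ) ≠ 0 := Nat.cast_ne_zero.mpr (by omega)
  have hm1' : (m:ℝ)+1 ≠ 0 := by positivity
  rw [P1mat, Pvmat]
  simp only [sub_mul, Matrix.smul_mul, Matrix.mul_smul, smul_smul]
  rw [DWv, WuWv hiN hc, WvWv hiN hc]
  simp only [smul_zero, smul_smul]
  match_scalars <;> field_simp <;> ring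

include hiN hc hm1 in
lemma PvP1 : Pvmat n m i N * P1mat n m i N = 0 := by
  have hm0 : (m:ℝ) ≠ 0 := Nat.cast_ne_zero.mpr (by omega)
  have hm1' : (m:ℝ)+1 ≠ 0 := by positivity
  rw [P1mat, Pvmat]
  simp only [mul_sub, Matrix.smul_mul, Matrix.mul_smul, smul_smul]
  rw [WvD, WvWu hiN hc, WvWv hiN hc]
  simp only [smul_zero, smul_smul]
  match_scalars <;> field_simp <;> ring

include hiN hm1 in
lemma starLap_decomp : starLap n m i N = P1mat n m i N + ((m:ℝ)+1) • Pvmat n m i N := by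
  have hm0 : (m:ℝ) ≠ 0 := Nat.cast_ne_zero.mpr (by omega)
  have hm1' : (m:ℝ)+1 ≠ 0 := by positivity
  ext k l
  simp only [starLap, P1mat, Pvmat, Dmat, Wu, Wv, Matrix.sub_apply, Matrix.add_apply,
    Matrix.smul_apply, smul_eq_mul, vecMulVec_apply, Matrix.diagonal_apply, Matrix.of_apply,
    uf, vf]
  by_cases hk : k = i <;> by_cases hl : l = i <;> by_cases hkN : k ∈ N <;>
    by_cases hlN : l ∈ N <;> by_cases hkl : k = l <;>
    simp_all <;> field_simp <;> ring

end proj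
open NormedSpace in
theorem exp_smul_idem {𝔸 : Type*} [NormedRing 𝔸] [NormedAlgebra ℝ 𝔸] [CompleteSpace 𝔸]
    (P : 𝔸) (hP : P * P = P) (t : ℝ) :
    exp (t • P) = 1 + (Real.exp t - 1) • P := by
  have hpow : ∀ k : ℕ, P ^ (k + 1) = P := by
    intro k; induction k with
    | zero => simp
    | succ k ih => rw [pow_succ, ih, hP]
  have hsum : Summable fun k : ℕ => ((k.factorial) : ℝ)⁻¹ • (t • P) ^ k :=
    expSeries_summable' (𝕂 := ℝ) (t • P)
  have hsc : Summable fun k : ℕ => t ^ k / (k.factorial : ℝ) := Real.summable_pow_div_factorial t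
  have hsc' : Summable fun k : ℕ => t ^ (k + 1) / (((k+1).factorial) : ℝ) :=
    (summable_nat_add_iff 1).mpr hsc
  have hre : Real.exp t = ∑' k : ℕ, t ^ k / (k.factorial : ℝ) := by
    rw [Real.exp_eq_exp_ℝ, exp_eq_tsum_div]
  rw [exp_eq_tsum ℝ]; simp only []; rw [hsum.tsum_eq_zero_add]
  have h1 : ∀ k : ℕ, (((k+1).factorial) : ℝ)⁻¹ • (t • P) ^ (k + 1) = (t ^ (k + 1) / (((k+1).factorial) : ℝ)) • P := by
    intro k
    rw [smul_pow, hpow, smul_smul, div_eq_inv_mul]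
  simp only [h1, pow_zero, Nat.factorial_zero, Nat.cast_one, inv_one, one_smul]
  rw [hsc'.tsum_smul_const]
  congr 1
  congr 1
  rw [hre, hsc.tsum_eq_zero_add]
  simp

open NormedSpace in
theorem matrix_exp_smul_idem {k : ℕ} (P : Matrix (Fin k) (Fin k) ℝ) (hP : P * P = P) (t : ℝ) :
    exp (t • P) = 1 + (Real.exp t - 1) • P := by
  letI : SeminormedRing (Matrix (Fin k) (Fin k) ℝ) := Matrix.linftyOpSemiNormedRing
  letI : NormedRing (Matrix (Fin k) (Fin k) ℝ) := Matrix.linftyOpNormedRing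
  letI : NormedAlgebra ℝ (Matrix (Fin k) (Fin k) ℝ) := Matrix.linftyOpNormedAlgebra
  exact exp_smul_idem P hP t

section expsec
variable {n m : ℕ} {i : Fin n} {N : Finset (Fin n)}
variable (hiN : i ∉ N) (hc : N.card = m) (hm1 : 1 ≤ m)

include hiN hc hm1 in
open NormedSpace in
theorem exp_starLap (T : ℝ) :
    exp (-T • starLap n m i N) =
      1 + (Real.exp (-T) - 1) • P1mat n m i N
        + (Real.exp (-((m:ℝ)+1) * T) - 1) • Pvmat n m i N := by
  have hsplit : -T • starLap n m i N
      = (-T) • P1mat n m i N + (-(((m:ℝ)+1) * T)) • Pvmat n m i N := by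
    rw [starLap_decomp hiN hm1, smul_add, smul_smul]
    congr 2
    ring
  have hcomm : Commute ((-T) • P1mat n m i N) ((-(((m:ℝ)+1) * T)) • Pvmat n m i N) := by
    unfold Commute SemiconjBy
    rw [Matrix.smul_mul, Matrix.mul_smul, Matrix.smul_mul, Matrix.mul_smul,
      P1Pv hiN hc hm1, PvP1 hiN hc hm1]
    simp
  rw [hsplit, Matrix.exp_add_of_commute _ _ hcomm,
    matrix_exp_smul_idem _ (P1P1 hiN hc hm1), matrix_exp_smul_idem _ (PvPv hiN hc hm1)]
  have : -((m:ℝ)+1) * T = -(((m:ℝ)+1) * T) := by ring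
  rw [this]
  simp only [add_mul, mul_add, one_mul, mul_one, Matrix.smul_mul, Matrix.mul_smul,
    P1Pv hiN hc hm1, smul_zero]
  abel

end expsec

section counting
variable {α : Type*} [DecidableEq α]

lemma card_filter_mem_powersetCard (s : Finset α) (k : α) (hk : k ∈ s) (m : ℕ) (hm : 1 ≤ m) :
    ((Finset.powersetCard m s).filter (fun N => k ∈ N)).card
      = (s.card - 1).choose (m - 1) := by
  rw [← Finset.card_erase_of_mem hk, ← Finset.card_powersetCard]
  apply Finset.card_nbij' (i := fun N => N.erase k) (j := fun M => insert k M)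
  · intro N hN
    simp only [Finset.mem_coe, Finset.mem_filter, Finset.mem_powersetCard] at hN ⊢
    exact ⟨Finset.erase_subset_erase k hN.1.1,
      by rw [Finset.card_erase_of_mem hN.2, hN.1.2]⟩
  · intro M hM
    simp only [Finset.mem_coe, Finset.mem_filter, Finset.mem_powersetCard] at hM ⊢
    have hkM : k ∉ M := fun h => Finset.notMem_erase k s (hM.1 h)
    refine ⟨⟨?_, ?_⟩, Finset.mem_insert_self k M⟩
    · exact Finset.insert_subset hk (hM.1.trans (Finset.erase_subset k s))
    · rw [Finset.card_insert_of_notMem hkM, hM.2]; omega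
  · intro N hN
    simp only [Finset.mem_coe, Finset.mem_filter] at hN
    exact Finset.insert_erase hN.2
  · intro M hM
    simp only [Finset.mem_coe, Finset.mem_powersetCard] at hM
    have hkM : k ∉ M := fun h => Finset.notMem_erase k s (hM.1 h)
    exact Finset.erase_insert hkM

lemma card_filter_pair_powersetCard (s : Finset α) (k l : α) (hk : k ∈ s) (hl : l ∈ s)
    (hkl : k ≠ l) (m : ℕ) (hm : 2 ≤ m) :
    ((Finset.powersetCard m s).filter (fun N => k ∈ N ∧ l ∈ N)).card
      = (s.card - 2).choose (m - 2) := by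
  have h2 : ((s.erase k).erase l).card = s.card - 2 := by
    rw [Finset.card_erase_of_mem (Finset.mem_erase.mpr ⟨hkl.symm, hl⟩),
      Finset.card_erase_of_mem hk]
    omega
  rw [← h2, ← Finset.card_powersetCard]
  apply Finset.card_nbij' (i := fun N => (N.erase k).erase l)
    (j := fun M => insert k (insert l M))
  · intro N hN
    simp only [Finset.mem_coe, Finset.mem_filter, Finset.mem_powersetCard] at hN ⊢
    refine ⟨Finset.erase_subset_erase l (Finset.erase_subset_erase k hN.1.1), ?_⟩
    rw [Finset.card_erase_of_mem (Finset.mem_erase.mpr ⟨hkl.symm, hN.2.2⟩),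
      Finset.card_erase_of_mem hN.2.1, hN.1.2]
    omega
  · intro M hM
    simp only [Finset.mem_coe, Finset.mem_filter, Finset.mem_powersetCard] at hM ⊢
    have hlM : l ∉ M := fun h => Finset.notMem_erase l _ (hM.1 h)
    have hkM : k ∉ insert l M := by
      intro h
      rcases Finset.mem_insert.mp h with h | h
      · exact hkl h
      · exact Finset.notMem_erase k s (Finset.erase_subset l _ (hM.1 h)) 
    have hMs : M ⊆ s := (hM.1.trans (Finset.erase_subset l _)).trans (Finset.erase_subset k s)
    refine ⟨⟨?_, ?_⟩, Finset.mem_insert_self k _,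
      Finset.mem_insert.mpr (Or.inr (Finset.mem_insert_self l M))⟩
    · exact Finset.insert_subset hk (Finset.insert_subset hl hMs)
    · rw [Finset.card_insert_of_notMem hkM, Finset.card_insert_of_notMem hlM, hM.2]; omega
  · intro N hN
    simp only [Finset.mem_coe, Finset.mem_filter] at hN
    beta_reduce
    rw [Finset.insert_erase (Finset.mem_erase.mpr ⟨(fun h => hkl h.symm : l ≠ k), hN.2.2⟩),
      Finset.insert_erase hN.2.1]
  · intro M hM
    simp only [Finset.mem_coe, Finset.mem_powersetCard] at hM
    have hlM : l ∉ M := fun h => Finset.notMem_erase l _ (hM.1 h)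
    have hkM : k ∉ insert l M := by
      intro h
      rcases Finset.mem_insert.mp h with h | h
      · exact hkl h
      · exact Finset.notMem_erase k s (Finset.erase_subset l _ (hM.1 h))
    beta_reduce
    rw [Finset.erase_insert hkM, Finset.erase_insert hlM]

end counting

set_option maxHeartbeats 2000000 in
/-- The average of `exp(-T L_{i,N})` over all `m`-element subsets `N` of
`V \ {i}` equals `M_i(T)`. -/
theorem average_exp_starLap_eq_Mmat (n m : ℕ) (hn : 3 ≤ n) (hm1 : 1 ≤ m) (hm2 : m ≤ n - 1)
    (i : Fin n) (T : ℝ) (hT : 0 < T) :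
    (((n - 1).choose m : ℝ))⁻¹ •
      ∑ N ∈ Finset.powersetCard m ((Finset.univ : Finset (Fin n)).erase i),
        NormedSpace.exp (-T • starLap n m i N) = Mmat n m i T := by
  classical
  have hm0 : (m:ℝ) ≠ 0 := Nat.cast_ne_zero.mpr (by omega)
  have hm1' : (m:ℝ)+1 ≠ 0 := by positivity
  have hn1 : (n:ℝ) - 1 ≠ 0 := by
    have : (3:ℝ) ≤ (n:ℝ) := by exact_mod_cast hn
    nlinarith
  have hn2 : (n:ℝ) - 2 ≠ 0 := by
    have : (3:ℝ) ≤ (n:ℝ) := by exact_mod_cast hn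
    nlinarith
  have hC0 : ((n-1).choose m : ℝ) ≠ 0 :=
    Nat.cast_ne_zero.mpr (Nat.choose_pos hm2).ne'
  -- casts for erase card
  have hecard : ((Finset.univ : Finset (Fin n)).erase i).card = n - 1 := by
    rw [Finset.card_erase_of_mem (Finset.mem_univ i), Finset.card_univ, Fintype.card_fin]
  -- counting sums
  have hcard : ((Finset.powersetCard m ((Finset.univ : Finset (Fin n)).erase i)).card : ℝ)
      = ((n-1).choose m : ℝ) := by
    rw [Finset.card_powersetCard, hecard]
  have hS1 : ∀ k : Fin n, k ≠ i →
      ∑ N ∈ Finset.powersetCard m ((Finset.univ : Finset (Fin n)).erase i),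
        (if k ∈ N then (1:ℝ) else 0) = ((n-2).choose (m-1) : ℝ) := by
    intro k hk
    rw [Finset.sum_boole]
    norm_cast
    rw [card_filter_mem_powersetCard _ k (Finset.mem_erase.mpr ⟨hk, Finset.mem_univ k⟩) m hm1,
      hecard, show n - 1 - 1 = n - 2 by omega]
  have hS2 : 2 ≤ m → ∀ k l : Fin n, k ≠ i → l ≠ i → k ≠ l →
      ∑ N ∈ Finset.powersetCard m ((Finset.univ : Finset (Fin n)).erase i),
        (if k ∈ N ∧ l ∈ N then (1:ℝ) else 0) = ((n-3).choose (m-2) : ℝ) := by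
    intro hm2' k l hk hl hkl
    rw [Finset.sum_boole]
    norm_cast
    rw [card_filter_pair_powersetCard _ k l (Finset.mem_erase.mpr ⟨hk, Finset.mem_univ k⟩)
      (Finset.mem_erase.mpr ⟨hl, Finset.mem_univ l⟩) hkl m hm2', hecard, show n - 1 - 2 = n - 3 by omega]
  -- choose identities
  have id1 : ((n:ℝ)-1) * ((n-2).choose (m-1) : ℝ) = (m:ℝ) * ((n-1).choose m : ℝ) := by
    have e := Nat.add_one_mul_choose_eq (n-2) (m-1)
    rw [show n - 2 + 1 = n - 1 by omega, show m - 1 + 1 = m by omega] at e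
    have hc1 : ((n-1 : ℕ) : ℝ) = (n:ℝ) - 1 := by
      push_cast [Nat.cast_sub (show 1 ≤ n by omega)]; ring
    rw [← hc1]
    exact_mod_cast e.trans (mul_comm _ _)
  have hch1 : ((n-2).choose (m-1) : ℝ) = (m:ℝ) * ((n-1).choose m : ℝ) / ((n:ℝ)-1) := by
    rw [eq_div_iff hn1, ← id1]; ring
  have id2 : 2 ≤ m → ((n:ℝ)-2) * ((n-3).choose (m-2) : ℝ)
      = ((m:ℝ)-1) * ((n-2).choose (m-1) : ℝ) := by
    intro hm2'
    have e := Nat.add_one_mul_choose_eq (n-3) (m-2)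
    rw [show n - 3 + 1 = n - 2 by omega, show m - 2 + 1 = m - 1 by omega] at e
    have hc1 : ((n-2 : ℕ) : ℝ) = (n:ℝ) - 2 := by
      push_cast [Nat.cast_sub (show 2 ≤ n by omega)]; ring
    have hc2 : ((m-1 : ℕ) : ℝ) = (m:ℝ) - 1 := by
      push_cast [Nat.cast_sub (show 1 ≤ m by omega)]; ring
    rw [← hc1, ← hc2]
    exact_mod_cast e.trans (mul_comm _ _)
  have hch2 : 2 ≤ m → ((n-3).choose (m-2) : ℝ)
      = ((m:ℝ)-1) * (m:ℝ) * ((n-1).choose m : ℝ) / (((n:ℝ)-1) * ((n:ℝ)-2)) := by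
    intro hm2'
    rw [eq_div_iff (mul_ne_zero hn1 hn2)]
    have := id2 hm2'
    nlinarith [hch1, this]
  ext k l
  rw [Matrix.smul_apply, Matrix.sum_apply, smul_eq_mul]
  have hrw : ∀ N ∈ Finset.powersetCard m ((Finset.univ : Finset (Fin n)).erase i),
      (NormedSpace.exp (-T • starLap n m i N)) k l
        = (if k = l then (1:ℝ) else 0)
          + (Real.exp (-T) - 1) * ((if k = l then uf i N k else 0)
              - ((m:ℝ)+1)⁻¹ * (uf i N k * uf i N l)
              - ((m:ℝ)*((m:ℝ)+1))⁻¹ * (vf m i N k * vf m i N l))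
          + (Real.exp (-((m:ℝ)+1)*T) - 1)
              * (((m:ℝ)*((m:ℝ)+1))⁻¹ * (vf m i N k * vf m i N l)) := by
    intro N hN
    rw [Finset.mem_powersetCard] at hN
    have hiN : i ∉ N := fun h => (Finset.mem_erase.mp (hN.1 h)).1 rfl
    rw [exp_starLap hiN hN.2 hm1 T]
    simp [Matrix.add_apply, Matrix.smul_apply, Matrix.one_apply, P1mat, Pvmat, Dmat, Wu, Wv,
      Matrix.sub_apply, vecMulVec_apply, Matrix.diagonal_apply, smul_eq_mul, mul_sub, mul_add]
  rw [Finset.sum_congr rfl hrw]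
  by_cases hk : k = i <;> by_cases hl : l = i
  · -- k = i, l = i
    have hconst : ∀ N ∈ Finset.powersetCard m ((Finset.univ : Finset (Fin n)).erase i),
        ((if k = l then (1:ℝ) else 0)
          + (Real.exp (-T) - 1) * ((if k = l then uf i N k else 0)
              - ((m:ℝ)+1)⁻¹ * (uf i N k * uf i N l)
              - ((m:ℝ)*((m:ℝ)+1))⁻¹ * (vf m i N k * vf m i N l))
          + (Real.exp (-((m:ℝ)+1)*T) - 1)
              * (((m:ℝ)*((m:ℝ)+1))⁻¹ * (vf m i N k * vf m i N l)))
        = (1 + (m:ℝ) * Real.exp (-((m:ℝ)+1)*T)) / ((m:ℝ)+1) := by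
      intro N _
      simp only [hk, hl, uf, vf, if_pos rfl, ↓reduceIte]
      field_simp
      ring
    rw [Finset.sum_congr rfl hconst, Finset.sum_const, nsmul_eq_mul, hcard]
    simp only [Mmat, Matrix.of_apply, if_pos (And.intro hk hl)]
    field_simp
  · -- k = i, l ≠ i
    have hli : ¬ i = l := fun hh => hl hh.symm
    have hkl : ¬ k = l := fun h => hl (h.symm.trans hk)
    have hpt : ∀ N ∈ Finset.powersetCard m ((Finset.univ : Finset (Fin n)).erase i),
        ((if k = l then (1:ℝ) else 0)
          + (Real.exp (-T) - 1) * ((if k = l then uf i N k else 0)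
              - ((m:ℝ)+1)⁻¹ * (uf i N k * uf i N l)
              - ((m:ℝ)*((m:ℝ)+1))⁻¹ * (vf m i N k * vf m i N l))
          + (Real.exp (-((m:ℝ)+1)*T) - 1)
              * (((m:ℝ)*((m:ℝ)+1))⁻¹ * (vf m i N k * vf m i N l)))
        = ((1 - Real.exp (-((m:ℝ)+1)*T)) / ((m:ℝ)+1)) * (if l ∈ N then (1:ℝ) else 0) := by
      intro N _
      by_cases h : l ∈ N <;>
        simp only [uf, vf, hk, hl, hli, h, if_pos rfl, if_true, if_false, ite_true, ite_false,
          if_neg hli, if_neg hl, if_neg (fun c => c : False → False)] <;>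
        field_simp <;> ring
    rw [Finset.sum_congr rfl hpt, ← Finset.mul_sum, hS1 l hl, hch1]
    simp only [Mmat, Matrix.of_apply, if_neg (fun hand : k = i ∧ l = i => hl hand.2),
      if_neg hkl, if_pos (Or.inl hk)]
    field_simp
  · -- k ≠ i, l = i
    have hik : ¬ i = k := fun hh => hk hh.symm
    have hkl : ¬ k = l := fun h => hk (h.trans hl)
    have hpt : ∀ N ∈ Finset.powersetCard m ((Finset.univ : Finset (Fin n)).erase i),
        ((if k = l then (1:ℝ) else 0)
          + (Real.exp (-T) - 1) * ((if k = l then uf i N k else 0)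
              - ((m:ℝ)+1)⁻¹ * (uf i N k * uf i N l)
              - ((m:ℝ)*((m:ℝ)+1))⁻¹ * (vf m i N k * vf m i N l))
          + (Real.exp (-((m:ℝ)+1)*T) - 1)
              * (((m:ℝ)*((m:ℝ)+1))⁻¹ * (vf m i N k * vf m i N l)))
        = ((1 - Real.exp (-((m:ℝ)+1)*T)) / ((m:ℝ)+1)) * (if k ∈ N then (1:ℝ) else 0) := by
      intro N _
      by_cases h : k ∈ N <;>
        simp only [uf, vf, hl, hk, hik, h, if_pos rfl, if_true, if_false, ite_true, ite_false] <;>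
        field_simp <;> ring
    rw [Finset.sum_congr rfl hpt, ← Finset.mul_sum, hS1 k hk, hch1]
    simp only [Mmat, Matrix.of_apply, if_neg (fun hand : k = i ∧ l = i => hk hand.1),
      if_neg hkl, if_pos (Or.inr hl)]
    field_simp
  · -- k ≠ i, l ≠ i
    by_cases hkl : k = l
    · -- diagonal
      have hpt : ∀ N ∈ Finset.powersetCard m ((Finset.univ : Finset (Fin n)).erase i),
          ((if k = l then (1:ℝ) else 0)
            + (Real.exp (-T) - 1) * ((if k = l then uf i N k else 0)
                - ((m:ℝ)+1)⁻¹ * (uf i N k * uf i N l)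
                - ((m:ℝ)*((m:ℝ)+1))⁻¹ * (vf m i N k * vf m i N l))
            + (Real.exp (-((m:ℝ)+1)*T) - 1)
                * (((m:ℝ)*((m:ℝ)+1))⁻¹ * (vf m i N k * vf m i N l)))
          = 1 + ((((m:ℝ)^2-1) * Real.exp (-T) + Real.exp (-((m:ℝ)+1)*T) - (m:ℝ)^2)
              / ((m:ℝ)*((m:ℝ)+1))) * (if k ∈ N then (1:ℝ) else 0) := by
        intro N _
        by_cases h : k ∈ N <;>
          simp only [← hkl, uf, vf, hk, h, if_pos rfl, if_true, if_false, ite_true, ite_false,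
            if_neg hk] <;>
          field_simp <;> ring
      rw [Finset.sum_congr rfl hpt, Finset.sum_add_distrib, Finset.sum_const, ← Finset.mul_sum,
        hS1 k hk, hch1, nsmul_eq_mul, mul_one, hcard]
      simp only [Mmat, Matrix.of_apply, if_neg (fun hand : k = i ∧ l = i => hk hand.1),
        if_pos hkl]
      field_simp
    · -- off-diagonal, neither i
      have hor : ¬ (k = i ∨ l = i) := fun h => h.elim hk hl
      by_cases hm2' : 2 ≤ m
      · have hpt : ∀ N ∈ Finset.powersetCard m ((Finset.univ : Finset (Fin n)).erase i),
            ((if k = l then (1:ℝ) else 0)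
              + (Real.exp (-T) - 1) * ((if k = l then uf i N k else 0)
                  - ((m:ℝ)+1)⁻¹ * (uf i N k * uf i N l)
                  - ((m:ℝ)*((m:ℝ)+1))⁻¹ * (vf m i N k * vf m i N l))
              + (Real.exp (-((m:ℝ)+1)*T) - 1)
                  * (((m:ℝ)*((m:ℝ)+1))⁻¹ * (vf m i N k * vf m i N l)))
            = (((m:ℝ) + Real.exp (-((m:ℝ)+1)*T) - ((m:ℝ)+1) * Real.exp (-T))
                / ((m:ℝ)*((m:ℝ)+1))) * (if k ∈ N ∧ l ∈ N then (1:ℝ) else 0) := by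
          intro N _
          by_cases h1 : k ∈ N <;> by_cases h2 : l ∈ N <;>
            simp only [uf, vf, hk, hl, hkl, h1, h2, if_pos rfl, if_true, if_false, ite_true,
              ite_false, and_true, and_false, true_and, false_and, if_neg hk, if_neg hl,
              if_neg hkl] <;>
            field_simp <;> ring
        rw [Finset.sum_congr rfl hpt, ← Finset.mul_sum, hS2 hm2' k l hk hl hkl, hch2 hm2']
        simp only [Mmat, Matrix.of_apply, if_neg (fun hand : k = i ∧ l = i => hk hand.1),
          if_neg hkl, if_neg hor]
        field_simp
      · have hme : m = 1 := by omega
        have hpt : ∀ N ∈ Finset.powersetCard m ((Finset.univ : Finset (Fin n)).erase i),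
            ((if k = l then (1:ℝ) else 0)
              + (Real.exp (-T) - 1) * ((if k = l then uf i N k else 0)
                  - ((m:ℝ)+1)⁻¹ * (uf i N k * uf i N l)
                  - ((m:ℝ)*((m:ℝ)+1))⁻¹ * (vf m i N k * vf m i N l))
              + (Real.exp (-((m:ℝ)+1)*T) - 1)
                  * (((m:ℝ)*((m:ℝ)+1))⁻¹ * (vf m i N k * vf m i N l)))
            = 0 := by
          intro N hN
          rw [Finset.mem_powersetCard] at hN
          have hnb : ¬ (k ∈ N ∧ l ∈ N) := by
            rintro ⟨h1, h2⟩
            have := Finset.one_lt_card.mpr ⟨k, h1, l, h2, hkl⟩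
            omega
          by_cases h1 : k ∈ N <;> by_cases h2 : l ∈ N
          · exact absurd ⟨h1, h2⟩ hnb
          · simp [uf, vf, hk, hl, hkl, h1, h2]; try ring
          · simp [uf, vf, hk, hl, hkl, h1, h2]; try ring
          · simp [uf, vf, hk, hl, hkl, h1, h2]; try ring
        rw [Finset.sum_eq_zero hpt]
        simp only [Mmat, Matrix.of_apply, if_neg (fun hand : k = i ∧ l = i => hk hand.1),
          if_neg hkl, if_neg hor, hme]
        norm_num
end
end

section
/- Let n ≥ 2, let L be a random n×n real matrix taking finitely many values, each of which is a graph Laplacian on n nodes, and let T ≥ 0. Then the symmetric matrix E[exp(−2T L)] has the all-ones vector 𝟙 as an eigenvector with eigenvalue 1, this eigenvalue is the largest eigenvalue λ_n(E[exp(−2TL)]), and for every x ∈ ℝⁿ orthogonal to 𝟙 one has E[ ‖exp(−T L) x‖² ] ≤ λ_{n−1}( E[exp(−2T L)] ) · ‖x‖². -/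
open Matrix MeasureTheory ProbabilityTheory

/-! ### Auxiliary lemmas -/

section Aux
variable {n : ℕ}

lemma lap_mulVec_one {L : Matrix (Fin n) (Fin n) ℝ}
    (h : ∀ k, ∑ l, L k l = 0) : L *ᵥ (fun _ => (1 : ℝ)) = 0 := by
  funext k
  simpa [Matrix.mulVec, dotProduct] using h k

lemma lap_quad_nonneg {L : Matrix (Fin n) (Fin n) ℝ} (hL : L.IsSymm)
    (hoff : ∀ k l, k ≠ l → L k l ≤ 0) (hrow : ∀ k, ∑ l, L k l = 0)
    (x : Fin n → ℝ) : 0 ≤ x ⬝ᵥ (L *ᵥ x) := by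
  have hcol : ∀ l, ∑ k, L k l = 0 := by
    intro l
    have : ∀ k, L k l = L l k := fun k => (hL.apply k l).symm
    simp_rw [this]
    exact hrow l
  have key : ∑ k, ∑ l, (-(L k l)) * (x k - x l)^2 = 2 * (x ⬝ᵥ (L *ᵥ x)) := by
    have expand : ∀ k l, (-(L k l)) * (x k - x l)^2 =
        (2 * (x k * (L k l * x l))) - (L k l * x k ^ 2) - (L k l * x l ^ 2) := by
      intro k l; ring
    simp_rw [expand, Finset.sum_sub_distrib]
    have h1 : ∑ k, ∑ l, L k l * x k ^ 2 = 0 := by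
      have : ∀ k : Fin n, ∑ l, L k l * x k ^ 2 = (∑ l, L k l) * x k ^ 2 := by
        intro k; rw [Finset.sum_mul]
      simp_rw [this, hrow, zero_mul, Finset.sum_const_zero]
    have h2 : ∑ k, ∑ l, L k l * x l ^ 2 = 0 := by
      rw [Finset.sum_comm]
      have : ∀ l : Fin n, ∑ k, L k l * x l ^ 2 = (∑ k, L k l) * x l ^ 2 := by
        intro l; rw [Finset.sum_mul]
      simp_rw [this, hcol, zero_mul, Finset.sum_const_zero]
    have h3 : ∑ k, ∑ l, 2 * (x k * (L k l * x l)) = 2 * (x ⬝ᵥ (L *ᵥ x)) := by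
      simp_rw [dotProduct, Matrix.mulVec, dotProduct, Finset.mul_sum]
    rw [h1, h2, h3, sub_zero, sub_zero]
  have hnn : 0 ≤ ∑ k, ∑ l, (-(L k l)) * (x k - x l)^2 := by
    apply Finset.sum_nonneg; intro k _
    apply Finset.sum_nonneg; intro l _
    by_cases hkl : k = l
    · subst hkl; simp
    · exact mul_nonneg (by linarith [hoff k l hkl]) (sq_nonneg _)
  rw [key] at hnn
  linarith

lemma unitary_dot {V : Matrix (Fin n) (Fin n) ℝ} (hV : V * Vᵀ = 1)
    (x y : Fin n → ℝ) : (Vᵀ *ᵥ x) ⬝ᵥ (Vᵀ *ᵥ y) = x ⬝ᵥ y := by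
  rw [Matrix.dotProduct_mulVec, Matrix.vecMul_transpose, Matrix.mulVec_mulVec, hV,
    Matrix.one_mulVec]

lemma unitary_quad {V : Matrix (Fin n) (Fin n) ℝ} (d : Fin n → ℝ) (x y : Fin n → ℝ) :
    x ⬝ᵥ ((V * Matrix.diagonal d * Vᵀ) *ᵥ y) =
      ∑ i, d i * ((Vᵀ *ᵥ x) i * (Vᵀ *ᵥ y) i) := by
  rw [← Matrix.mulVec_mulVec, ← Matrix.mulVec_mulVec, Matrix.dotProduct_mulVec,
    ← Matrix.mulVec_transpose, dotProduct]
  refine Finset.sum_congr rfl fun i _ => ?_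
  rw [Matrix.mulVec_diagonal]
  ring

lemma isHermitian_of_isSymm {A : Matrix (Fin n) (Fin n) ℝ} (h : A.IsSymm) :
    A.IsHermitian := by
  rwa [Matrix.IsHermitian, Matrix.conjTranspose_eq_transpose_of_trivial]

lemma exp_spectral {L : Matrix (Fin n) (Fin n) ℝ} (hL : L.IsHermitian) (t : ℝ) :
    NormedSpace.exp (t • L) =
      (hL.eigenvectorUnitary : Matrix (Fin n) (Fin n) ℝ) *
        Matrix.diagonal (fun i => Real.exp (t * hL.eigenvalues i)) *
        (hL.eigenvectorUnitary : Matrix (Fin n) (Fin n) ℝ)ᵀ := by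
  set V : Matrix (Fin n) (Fin n) ℝ := (hL.eigenvectorUnitary : Matrix (Fin n) (Fin n) ℝ) with hV
  have hstar : star V = Vᵀ := Matrix.conjTranspose_eq_transpose_of_trivial V
  have hVVt : V * Vᵀ = 1 := by
    rw [← hstar]; exact (Matrix.mem_unitaryGroup_iff).mp hL.eigenvectorUnitary.2
  have hVtV : Vᵀ * V = 1 := by
    rw [← hstar]; exact (Matrix.mem_unitaryGroup_iff').mp hL.eigenvectorUnitary.2
  have hinv : V⁻¹ = Vᵀ := Matrix.inv_eq_right_inv hVVt
  have hunit : IsUnit V := ⟨⟨V, Vᵀ, hVVt, hVtV⟩, rfl⟩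
  have hspec : L = V * Matrix.diagonal hL.eigenvalues * Vᵀ := by
    have := hL.spectral_theorem
    rwa [Unitary.conjStarAlgAut_apply, hstar, RCLike.ofReal_real_eq_id, Function.id_comp] at this
  have hdiag : t • Matrix.diagonal hL.eigenvalues
      = Matrix.diagonal (fun i => t * hL.eigenvalues i) := by
    rw [← Matrix.diagonal_smul]; rfl
  have hsmul : t • L = V * Matrix.diagonal (fun i => t * hL.eigenvalues i) * V⁻¹ := by
    rw [hinv]
    conv_lhs => rw [hspec]
    rw [← smul_mul_assoc, ← mul_smul_comm, hdiag]
  rw [hsmul, Matrix.exp_conj V _ hunit, hinv, Matrix.exp_diagonal]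
  have : NormedSpace.exp (fun i => t * hL.eigenvalues i)
      = fun i => Real.exp (t * hL.eigenvalues i) := by
    funext i
    rw [Pi.coe_exp, ← Real.exp_eq_exp_ℝ]
  rw [this]

lemma eig_nonneg_of_lap {L : Matrix (Fin n) (Fin n) ℝ} (hLl : IsGraphLaplacian L)
    (hL : L.IsHermitian) (i : Fin n) : 0 ≤ hL.eigenvalues i := by
  have h := hL.eigenvalues_eq i
  have h2 : hL.eigenvalues i =
      (⇑(hL.eigenvectorBasis i) : Fin n → ℝ) ⬝ᵥ (L *ᵥ ⇑(hL.eigenvectorBasis i)) := by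
    simpa using h
  rw [h2]
  apply lap_quad_nonneg hLl.1 hLl.2.1 hLl.2.2

lemma unitary_mul_transpose {A : Matrix (Fin n) (Fin n) ℝ} (hA : A.IsHermitian) :
    (hA.eigenvectorUnitary : Matrix (Fin n) (Fin n) ℝ) *
      (hA.eigenvectorUnitary : Matrix (Fin n) (Fin n) ℝ)ᵀ = 1 := by
  rw [← Matrix.conjTranspose_eq_transpose_of_trivial]
  exact (Matrix.mem_unitaryGroup_iff).mp hA.eigenvectorUnitary.2

lemma transpose_mul_unitary {A : Matrix (Fin n) (Fin n) ℝ} (hA : A.IsHermitian) :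
    (hA.eigenvectorUnitary : Matrix (Fin n) (Fin n) ℝ)ᵀ *
      (hA.eigenvectorUnitary : Matrix (Fin n) (Fin n) ℝ) = 1 := by
  rw [← Matrix.conjTranspose_eq_transpose_of_trivial]
  exact (Matrix.mem_unitaryGroup_iff').mp hA.eigenvectorUnitary.2

lemma spectral_real {A : Matrix (Fin n) (Fin n) ℝ} (hA : A.IsHermitian) :
    A = (hA.eigenvectorUnitary : Matrix (Fin n) (Fin n) ℝ) *
      Matrix.diagonal hA.eigenvalues *
      (hA.eigenvectorUnitary : Matrix (Fin n) (Fin n) ℝ)ᵀ := by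
  have := hA.spectral_theorem
  rwa [Unitary.conjStarAlgAut_apply, Matrix.star_eq_conjTranspose, Matrix.conjTranspose_eq_transpose_of_trivial,
    RCLike.ofReal_real_eq_id, Function.id_comp] at this

lemma exp_lap_props {L : Matrix (Fin n) (Fin n) ℝ} (hLl : IsGraphLaplacian L)
    (t : ℝ) (ht : t ≤ 0) :
    (NormedSpace.exp (t • L)).IsSymm ∧
    (NormedSpace.exp (t • L)) *ᵥ (fun _ => (1 : ℝ)) = (fun _ => (1 : ℝ)) ∧
    (∀ x : Fin n → ℝ, 0 ≤ x ⬝ᵥ (NormedSpace.exp (t • L) *ᵥ x)) ∧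
    (∀ x : Fin n → ℝ, x ⬝ᵥ (NormedSpace.exp (t • L) *ᵥ x) ≤ x ⬝ᵥ x) := by
  have hL : L.IsHermitian := isHermitian_of_isSymm hLl.1
  set V : Matrix (Fin n) (Fin n) ℝ := (hL.eigenvectorUnitary : Matrix (Fin n) (Fin n) ℝ) with hV
  have hVVt : V * Vᵀ = 1 := unitary_mul_transpose hL
  have hVtV : Vᵀ * V = 1 := transpose_mul_unitary hL
  have hexp := exp_spectral hL t
  have hμ : ∀ i, 0 ≤ hL.eigenvalues i := eig_nonneg_of_lap hLl hL
  have he0 : ∀ i, 0 ≤ Real.exp (t * hL.eigenvalues i) := fun i => (Real.exp_pos _).le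
  have he1 : ∀ i, Real.exp (t * hL.eigenvalues i) ≤ 1 := by
    intro i
    rw [show (1 : ℝ) = Real.exp 0 by rw [Real.exp_zero]]
    exact Real.exp_le_exp.mpr (mul_nonpos_iff.mpr (Or.inr ⟨ht, hμ i⟩))
  refine ⟨?_, ?_, ?_, ?_⟩
  · have hsym : (t • L).IsSymm := by
      rw [Matrix.IsSymm, Matrix.transpose_smul, hLl.1]
    exact Matrix.IsSymm.exp hsym
  · have hL1 : L *ᵥ (fun _ => (1 : ℝ)) = 0 := lap_mulVec_one hLl.2.2
    have hDu : Matrix.diagonal hL.eigenvalues *ᵥ (Vᵀ *ᵥ (fun _ => (1 : ℝ))) = 0 := by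
      have h0 : Vᵀ *ᵥ (L *ᵥ (fun _ => (1 : ℝ))) = 0 := by rw [hL1, Matrix.mulVec_zero]
      rw [Matrix.mulVec_mulVec] at h0
      conv_lhs at h0 => rw [spectral_real hL]
      rw [show Vᵀ * ((V * Matrix.diagonal hL.eigenvalues) * Vᵀ)
            = Matrix.diagonal hL.eigenvalues * Vᵀ by
          simp only [← Matrix.mul_assoc]; rw [hVtV, Matrix.one_mul]] at h0
      rwa [← Matrix.mulVec_mulVec] at h0
    have hu : ∀ i, hL.eigenvalues i * (Vᵀ *ᵥ (fun _ => (1 : ℝ))) i = 0 := by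
      intro i
      have := congrFun hDu i
      rwa [Matrix.mulVec_diagonal] at this
    rw [hexp, ← Matrix.mulVec_mulVec, ← Matrix.mulVec_mulVec]
    have hdiag : Matrix.diagonal (fun i => Real.exp (t * hL.eigenvalues i)) *ᵥ
        (Vᵀ *ᵥ (fun _ => (1 : ℝ))) = Vᵀ *ᵥ (fun _ => (1 : ℝ)) := by
      funext i
      rw [Matrix.mulVec_diagonal]
      by_cases h0 : (Vᵀ *ᵥ (fun _ => (1 : ℝ))) i = 0
      · rw [h0, mul_zero]
      · have : hL.eigenvalues i = 0 := by
          rcases mul_eq_zero.mp (hu i) with h | h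
          · exact h
          · exact absurd h h0
        rw [this, mul_zero, Real.exp_zero, one_mul]
    rw [hdiag, Matrix.mulVec_mulVec, hVVt, Matrix.one_mulVec]
  · intro x
    rw [hexp, unitary_quad]
    exact Finset.sum_nonneg fun i _ => mul_nonneg (he0 i) (mul_self_nonneg _)
  · intro x
    rw [hexp, unitary_quad]
    calc ∑ i, Real.exp (t * hL.eigenvalues i) * ((Vᵀ *ᵥ x) i * (Vᵀ *ᵥ x) i)
        ≤ ∑ i, (Vᵀ *ᵥ x) i * (Vᵀ *ᵥ x) i := by
          refine Finset.sum_le_sum fun i _ => ?_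
          calc Real.exp (t * hL.eigenvalues i) * ((Vᵀ *ᵥ x) i * (Vᵀ *ᵥ x) i)
              ≤ 1 * ((Vᵀ *ᵥ x) i * (Vᵀ *ᵥ x) i) :=
                mul_le_mul_of_nonneg_right (he1 i) (mul_self_nonneg _)
            _ = (Vᵀ *ᵥ x) i * (Vᵀ *ᵥ x) i := one_mul _
      _ = x ⬝ᵥ x := unitary_dot hVVt x x

lemma exp_mul_exp {L : Matrix (Fin n) (Fin n) ℝ} (T : ℝ) :
    NormedSpace.exp (-T • L) * NormedSpace.exp (-T • L) =
      NormedSpace.exp (-(2 * T) • L) := by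
  rw [← Matrix.exp_add_of_commute _ _ (Commute.refl _)]
  congr 1
  module

lemma dot_mulVec_self {M : Matrix (Fin n) (Fin n) ℝ} (hM : M.IsSymm) (x : Fin n → ℝ) :
    (M *ᵥ x) ⬝ᵥ (M *ᵥ x) = x ⬝ᵥ ((M * M) *ᵥ x) := by
  rw [Matrix.dotProduct_mulVec, ← Matrix.mulVec_transpose, hM, Matrix.mulVec_mulVec,
    dotProduct_comm]

lemma eucNorm_sq (y : Fin n → ℝ) : eucNorm y ^ 2 = y ⬝ᵥ y := by
  rw [eucNorm, EuclideanSpace.norm_eq, Real.sq_sqrt (by positivity)]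
  rw [dotProduct]
  refine Finset.sum_congr rfl fun i _ => ?_
  rw [show ((WithLp.equiv 2 (Fin n → ℝ)).symm y).ofLp i = y i from rfl, Real.norm_eq_abs, sq_abs, sq]

lemma integrable_comp {Ω : Type} [MeasurableSpace Ω] (μ : Measure Ω)
    [IsProbabilityMeasure μ]
    (L : Ω → Matrix (Fin n) (Fin n) ℝ) (hmeas : Measurable L)
    (hfin : (Set.range L).Finite)
    (g : Matrix (Fin n) (Fin n) ℝ → ℝ) : Integrable (fun ω => g (L ω)) μ := by
  have hsing : ∀ A : Matrix (Fin n) (Fin n) ℝ, MeasurableSet {A} := by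
    intro A
    have h : {A} = ⋂ p, ⋂ q, {M : Matrix (Fin n) (Fin n) ℝ | M p q = A p q} := by
      ext M
      simp only [Set.mem_singleton_iff, Set.mem_iInter, Set.mem_setOf_eq]
      constructor
      · rintro rfl; exact fun p q => rfl
      · intro h; funext p q; exact h p q
    rw [h]
    refine MeasurableSet.iInter fun p => MeasurableSet.iInter fun q => ?_
    have hm : Measurable fun M : Matrix (Fin n) (Fin n) ℝ => M p q :=
      (measurable_pi_apply q).comp (measurable_pi_apply p)
    exact hm (measurableSet_singleton (A p q))
  have hfmeas : Measurable fun ω => g (L ω) := by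
    intro s _
    have hpre : (fun ω => g (L ω)) ⁻¹' s = L ⁻¹' ((g ⁻¹' s) ∩ Set.range L) := by
      ext ω
      simp only [Set.mem_preimage, Set.mem_inter_iff]
      exact ⟨fun h => ⟨h, ⟨ω, rfl⟩⟩, fun h => h.1⟩
    rw [hpre]
    have hF : ((g ⁻¹' s) ∩ Set.range L).Finite :=
      hfin.subset Set.inter_subset_right
    have hFm : MeasurableSet ((g ⁻¹' s) ∩ Set.range L) := by
      rw [← Set.biUnion_of_singleton ((g ⁻¹' s) ∩ Set.range L)]
      exact hF.measurableSet_biUnion fun A _ => hsing A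
    exact hmeas hFm
  obtain ⟨C, hC⟩ := (hfin.image fun A => |g A|).bddAbove
  refine Integrable.mono' (integrable_const C) hfmeas.aestronglyMeasurable ?_
  refine Filter.Eventually.of_forall fun ω => ?_
  rw [Real.norm_eq_abs]
  exact hC ⟨L ω, ⟨ω, rfl⟩, rfl⟩

private lemma getD_eq_gE (l : List ℝ) (k : ℕ) (h : k < l.length) : l.getD k 0 = l[k] := by
  rw [List.getD_eq_getElem?_getD, List.getElem?_eq_getElem h, Option.getD_some]

lemma sortedList_facts (μ : Fin n → ℝ) :
    ((Finset.univ.val.map μ).sort (· ≤ ·)).length = n ∧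
    ((Finset.univ.val.map μ).sort (· ≤ ·)).Pairwise (· ≤ ·) ∧
    (∀ a : ℝ, a ∈ ((Finset.univ.val.map μ).sort (· ≤ ·)) ↔ ∃ i, μ i = a) := by
  refine ⟨?_, Multiset.pairwise_sort _ _, ?_⟩
  · rw [Multiset.length_sort]; simp
  · intro a; rw [Multiset.mem_sort]; simp [List.mem_ofFn, eq_comm]

lemma sorted_top (hn : 1 ≤ n) (μ : Fin n → ℝ) (hle : ∀ i, μ i ≤ 1) (hex : ∃ i, μ i = 1) :
    ((Finset.univ.val.map μ).sort (· ≤ ·)).getD (n - 1) 0 = 1 := by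
  obtain ⟨hlen, hsort, hmem⟩ := sortedList_facts μ
  set l := ((Finset.univ.val.map μ).sort (· ≤ ·)) with hl
  have h1 : n - 1 < l.length := by omega
  rw [getD_eq_gE l _ h1]
  have hub : l[n-1] ≤ 1 := by
    obtain ⟨i, hi⟩ := (hmem _).mp (l.getElem_mem h1)
    rw [← hi]; exact hle i
  obtain ⟨i, hi⟩ := hex
  obtain ⟨k, hk, hkl⟩ := List.mem_iff_getElem.mp ((hmem 1).mpr ⟨i, hi⟩)
  have hlb : l[k] ≤ l[n-1] := by
    have := hsort.rel_get_of_le (a := ⟨k, hk⟩) (b := ⟨n - 1, h1⟩) (by simp; omega)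
    simpa using this
  rw [hkl] at hlb
  linarith

lemma sorted_second_mem (hn : 2 ≤ n) (μ : Fin n → ℝ) :
    ∃ i, μ i = ((Finset.univ.val.map μ).sort (· ≤ ·)).getD (n - 2) 0 := by
  obtain ⟨hlen, hsort, hmem⟩ := sortedList_facts μ
  set l := ((Finset.univ.val.map μ).sort (· ≤ ·)) with hl
  have h2 : n - 2 < l.length := by omega
  rw [getD_eq_gE l _ h2]
  exact (hmem _).mp (l.getElem_mem h2)

lemma sorted_second_two (hn : 2 ≤ n) (μ : Fin n → ℝ) (i j : Fin n) (hij : i ≠ j)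
    (hi : ((Finset.univ.val.map μ).sort (· ≤ ·)).getD (n - 2) 0 < μ i)
    (hj : ((Finset.univ.val.map μ).sort (· ≤ ·)).getD (n - 2) 0 < μ j) : False := by
  obtain ⟨hlen, hsort, hmem⟩ := sortedList_facts μ
  set l := ((Finset.univ.val.map μ).sort (· ≤ ·)) with hl
  set s := l.getD (n - 2) 0 with hs
  have h2 : n - 2 < l.length := by omega
  have hsval : s = l[n-2] := by rw [hs, getD_eq_gE l _ h2]
  have hc1 : 2 ≤ Multiset.countP (fun a => s < a) (Finset.univ.val.map μ) := by
    rw [Multiset.countP_map]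
    have hcard : 1 < (Finset.univ.filter fun k : Fin n => s < μ k).card :=
      Finset.one_lt_card.mpr
        ⟨i, Finset.mem_filter.mpr ⟨Finset.mem_univ i, hi⟩,
         j, Finset.mem_filter.mpr ⟨Finset.mem_univ j, hj⟩, hij⟩
    have heq : (Finset.univ.filter fun k : Fin n => s < μ k).card
        = Multiset.card (Multiset.filter (fun k : Fin n => s < μ k) Finset.univ.val) := by
      rw [Finset.card, Finset.filter_val]
    rw [heq] at hcard
    omega
  have hc2 : Multiset.countP (fun a => s < a) (Finset.univ.val.map μ) ≤ 1 := by
    rw [← Multiset.sort_eq (Finset.univ.val.map μ) (· ≤ ·), ← hl, Multiset.coe_countP]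
    have h0 : List.countP (fun b => decide (s < b)) (l.take (n - 1)) = 0 := by
      rw [List.countP_eq_zero]
      intro a ha
      obtain ⟨k, hk, hkl⟩ := List.mem_take_iff_getElem.mp ha
      have hk1 : k < n - 1 := lt_of_lt_of_le hk (min_le_left _ _)
      have hk2 : k < l.length := lt_of_lt_of_le hk (min_le_right _ _)
      have hle : l[k] ≤ l[n-2] := by
        have := hsort.rel_get_of_le (a := ⟨k, hk2⟩) (b := ⟨n - 2, h2⟩) (by simp; omega)
        simpa using this
      simp only [decide_eq_true_eq, not_lt]
      rw [← hkl, hsval]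
      exact hle
    rw [← List.take_append_drop (n - 1) l, List.countP_append, h0, zero_add]
    refine le_trans List.countP_le_length ?_
    rw [List.length_drop, hlen]
    omega
  omega

lemma sortedEig_eq {A : Matrix (Fin n) (Fin n) ℝ} (hA : A.IsHermitian) (k : ℕ) :
    sortedEig A k = ((Finset.univ.val.map hA.eigenvalues).sort (· ≤ ·)).getD k 0 := by
  rw [sortedEig, dif_pos hA]

end Aux

/-- For a random graph Laplacian `L` taking finitely many values and
`T ≥ 0`, the symmetric matrix `E[exp(-2T L)]` has the all-ones vector as eigenvector with
eigenvalue `1`, this is its largest eigenvalue, and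
`E[‖exp(-T L) x‖²] ≤ λ_{n-1}(E[exp(-2T L)]) ‖x‖²` for every `x ⊥ 𝟙`. -/
theorem expectation_exp_contraction (n : ℕ) (hn : 2 ≤ n)
    (Ω : Type) [MeasurableSpace Ω] (μ : Measure Ω) [IsProbabilityMeasure μ]
    (L : Ω → Matrix (Fin n) (Fin n) ℝ) (hmeas : Measurable L)
    (hfin : (Set.range L).Finite) (hlap : ∀ ω, IsGraphLaplacian (L ω))
    (T : ℝ) (hT : 0 ≤ T)
    (E : Matrix (Fin n) (Fin n) ℝ)
    (hE : E = Matrix.of fun p q => ∫ ω, NormedSpace.exp (-(2 * T) • L ω) p q ∂μ) :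
    E.IsSymm ∧
    (E *ᵥ (fun _ => (1 : ℝ))) = (fun _ => (1 : ℝ)) ∧
    sortedEig E (n - 1) = 1 ∧
    (∀ x : Fin n → ℝ, (∑ k, x k) = 0 →
      ∫ ω, eucNorm ((NormedSpace.exp (-T • L ω)) *ᵥ x) ^ 2 ∂μ ≤
        sortedEig E (n - 2) * eucNorm x ^ 2) := by
  have hint : ∀ g : Matrix (Fin n) (Fin n) ℝ → ℝ, Integrable (fun ω => g (L ω)) μ :=
    integrable_comp μ L hmeas hfin
  have hprops : ∀ ω, _ := fun ω =>
    exp_lap_props (hlap ω) (-(2 * T)) (neg_nonpos.mpr (by linarith))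
  have hEent : ∀ p q, E p q = ∫ ω, NormedSpace.exp (-(2 * T) • L ω) p q ∂μ :=
    fun p q => by rw [hE]; rfl
  -- symmetry
  have hEsymm : E.IsSymm := by
    rw [Matrix.IsSymm]
    ext p q
    rw [Matrix.transpose_apply, hEent, hEent]
    exact integral_congr_ae (Filter.Eventually.of_forall fun ω => (hprops ω).1.apply p q)
  -- row sums
  have hrow : ∀ ω (k : Fin n), ∑ l, NormedSpace.exp (-(2 * T) • L ω) k l = 1 := by
    intro ω k
    have := congrFun (hprops ω).2.1 k
    simpa [Matrix.mulVec, dotProduct] using this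
  have hEone : (E *ᵥ (fun _ => (1 : ℝ))) = (fun _ => (1 : ℝ)) := by
    funext k
    have h1 : (E *ᵥ (fun _ => (1 : ℝ))) k = ∑ l, E k l := by
      simp [Matrix.mulVec, dotProduct]
    rw [h1]
    have h2 : ∑ l, E k l
        = ∫ ω, ∑ l, NormedSpace.exp (-(2 * T) • L ω) k l ∂μ := by
      have hswap := integral_finset_sum (μ := μ) Finset.univ
        (f := fun (l : Fin n) ω => NormedSpace.exp (-(2 * T) • L ω) k l)
        (fun l _ => hint (fun A => NormedSpace.exp (-(2 * T) • A) k l))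
      rw [hswap]
      exact Finset.sum_congr rfl fun l _ => hEent k l
    rw [h2]
    simp_rw [hrow]
    simp
  -- quadratic form of E as an integral
  have hEquad : ∀ x : Fin n → ℝ, x ⬝ᵥ (E *ᵥ x)
      = ∫ ω, x ⬝ᵥ (NormedSpace.exp (-(2 * T) • L ω) *ᵥ x) ∂μ := by
    intro x
    have key : ∀ p : Fin n,
        ∫ ω, ∑ q, x p * (NormedSpace.exp (-(2 * T) • L ω) p q * x q) ∂μ
          = ∑ q, x p * (E p q * x q) := by
      intro p
      have hswap := integral_finset_sum (μ := μ) Finset.univ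
        (f := fun (q : Fin n) ω => x p * (NormedSpace.exp (-(2 * T) • L ω) p q * x q))
        (fun q _ => hint (fun A => x p * (NormedSpace.exp (-(2 * T) • A) p q * x q)))
      rw [hswap]
      refine Finset.sum_congr rfl fun q _ => ?_
      rw [integral_const_mul, integral_mul_const, hEent]
    have hlhs : x ⬝ᵥ (E *ᵥ x) = ∑ p, ∑ q, x p * (E p q * x q) := by
      simp_rw [dotProduct, Matrix.mulVec, dotProduct, Finset.mul_sum]
    have hptwise : ∀ ω, x ⬝ᵥ (NormedSpace.exp (-(2 * T) • L ω) *ᵥ x)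
        = ∑ p, ∑ q, x p * (NormedSpace.exp (-(2 * T) • L ω) p q * x q) := by
      intro ω
      simp_rw [dotProduct, Matrix.mulVec, dotProduct, Finset.mul_sum]
    rw [hlhs]
    simp_rw [hptwise]
    have hswap := integral_finset_sum (μ := μ) Finset.univ
      (f := fun (p : Fin n) ω => ∑ q, x p * (NormedSpace.exp (-(2 * T) • L ω) p q * x q))
      (fun p _ => hint (fun A => ∑ q, x p * (NormedSpace.exp (-(2 * T) • A) p q * x q)))
    rw [hswap]
    exact (Finset.sum_congr rfl fun p _ => (key p).symm)
  have hdotxx : ∀ x : Fin n → ℝ, 0 ≤ x ⬝ᵥ x :=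
    fun x => Finset.sum_nonneg fun i _ => mul_self_nonneg _
  have hquad_nonneg : ∀ x : Fin n → ℝ, 0 ≤ x ⬝ᵥ (E *ᵥ x) := by
    intro x
    rw [hEquad]
    exact integral_nonneg fun ω => (hprops ω).2.2.1 x
  have hquad_le : ∀ x : Fin n → ℝ, x ⬝ᵥ (E *ᵥ x) ≤ x ⬝ᵥ x := by
    intro x
    rw [hEquad]
    calc ∫ ω, x ⬝ᵥ (NormedSpace.exp (-(2 * T) • L ω) *ᵥ x) ∂μ
        ≤ ∫ _, x ⬝ᵥ x ∂μ :=
          integral_mono (hint (fun A => x ⬝ᵥ (NormedSpace.exp (-(2 * T) • A) *ᵥ x)))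
            (integrable_const _) (fun ω => (hprops ω).2.2.2 x)
      _ = x ⬝ᵥ x := by simp
  -- spectral analysis of E
  have hEherm : E.IsHermitian := isHermitian_of_isSymm hEsymm
  set ν := hEherm.eigenvalues with hν
  set V : Matrix (Fin n) (Fin n) ℝ :=
    (hEherm.eigenvectorUnitary : Matrix (Fin n) (Fin n) ℝ) with hVdef
  have hVVt : V * Vᵀ = 1 := unitary_mul_transpose hEherm
  have hVtV : Vᵀ * V = 1 := transpose_mul_unitary hEherm
  -- all eigenvalues are in [0,1]
  have hν01 : ∀ i, 0 ≤ ν i ∧ ν i ≤ 1 := by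
    intro i
    set x : Fin n → ℝ := fun k => V k i with hx
    have hw : Vᵀ *ᵥ x = fun j => (1 : Matrix (Fin n) (Fin n) ℝ) j i := by
      funext j
      calc (Vᵀ *ᵥ x) j = (Vᵀ * V) j i := by
            simp [Matrix.mulVec, dotProduct, Matrix.mul_apply, Matrix.transpose_apply, hx]
        _ = (1 : Matrix (Fin n) (Fin n) ℝ) j i := by rw [hVtV]
    have hquadν : x ⬝ᵥ (E *ᵥ x) = ν i := by
      conv_lhs => rw [spectral_real hEherm]
      rw [unitary_quad, hw]
      rw [Finset.sum_eq_single i (fun j _ hj => by simp [Matrix.one_apply_ne hj])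
        (fun h => absurd (Finset.mem_univ i) h)]
      simp [Matrix.one_apply, hν]
    have hxx : x ⬝ᵥ x = 1 := by
      rw [← unitary_dot hVVt x x, hw]
      simp [dotProduct, Matrix.one_apply]
    constructor
    · rw [← hquadν]; exact hquad_nonneg x
    · have := hquad_le x
      rw [hquadν, hxx] at this
      exact this
  -- the vector u = Vᵀ 𝟙
  set u : Fin n → ℝ := Vᵀ *ᵥ (fun _ => (1 : ℝ)) with hudef
  have hu : ∀ i, ν i * u i = u i := by
    have h0 : Vᵀ *ᵥ (E *ᵥ (fun _ => (1 : ℝ))) = u := by rw [hEone]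
    rw [Matrix.mulVec_mulVec] at h0
    conv_lhs at h0 => rw [spectral_real hEherm]
    rw [show Vᵀ * ((V * Matrix.diagonal ν) * Vᵀ) = Matrix.diagonal ν * Vᵀ by
        simp only [← Matrix.mul_assoc]; rw [hVtV, Matrix.one_mul]] at h0
    rw [← Matrix.mulVec_mulVec] at h0
    intro i
    have := congrFun h0 i
    rwa [Matrix.mulVec_diagonal] at this
  have hune : ∃ i, u i ≠ 0 := by
    by_contra h
    push_neg at h
    have h0 : u ⬝ᵥ u = 0 := by
      simp [dotProduct, h]
    rw [hudef, unitary_dot hVVt] at h0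
    have hne : (n : ℝ) ≠ 0 := Nat.cast_ne_zero.mpr (by omega)
    apply hne
    rw [← h0]
    simp [dotProduct]
  have hex1 : ∃ i, ν i = 1 := by
    obtain ⟨i, hui⟩ := hune
    exact ⟨i, mul_right_cancel₀ hui ((hu i).trans (one_mul _).symm)⟩
  have hsorted_top : sortedEig E (n - 1) = 1 := by
    rw [sortedEig_eq hEherm]
    exact sorted_top (by omega) ν (fun i => (hν01 i).2) hex1
  refine ⟨hEsymm, hEone, hsorted_top, ?_⟩
  -- final inequality
  intro x hx
  set s := sortedEig E (n - 2) with hsdef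
  have hsrepr : s = ((Finset.univ.val.map ν).sort (· ≤ ·)).getD (n - 2) 0 :=
    sortedEig_eq hEherm (n - 2)
  have hs0 : 0 ≤ s := by
    obtain ⟨i, hi⟩ := sorted_second_mem hn ν
    rw [hsrepr, ← hi]
    exact (hν01 i).1
  -- the integral equals the quadratic form of E
  have hptwise : ∀ ω, eucNorm ((NormedSpace.exp (-T • L ω)) *ᵥ x) ^ 2
      = x ⬝ᵥ (NormedSpace.exp (-(2 * T) • L ω) *ᵥ x) := by
    intro ω
    have hsymexp : (NormedSpace.exp (-T • L ω)).IsSymm :=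
      (exp_lap_props (hlap ω) (-T) (neg_nonpos.mpr hT)).1
    rw [eucNorm_sq, dot_mulVec_self hsymexp, exp_mul_exp]
  have hieq : ∫ ω, eucNorm ((NormedSpace.exp (-T • L ω)) *ᵥ x) ^ 2 ∂μ
      = x ⬝ᵥ (E *ᵥ x) := by
    rw [hEquad]
    exact integral_congr_ae (Filter.Eventually.of_forall hptwise)
  rw [hieq, show sortedEig E (n - 2) * eucNorm x ^ 2 = s * (x ⬝ᵥ x) by
    rw [← hsdef, eucNorm_sq]]
  -- main eigenvalue bound
  by_cases hcase : 1 ≤ s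
  · calc x ⬝ᵥ (E *ᵥ x) ≤ x ⬝ᵥ x := hquad_le x
      _ = 1 * (x ⬝ᵥ x) := (one_mul _).symm
      _ ≤ s * (x ⬝ᵥ x) := mul_le_mul_of_nonneg_right hcase (hdotxx x)
  · push_neg at hcase
    obtain ⟨i₀, hui₀⟩ := hune
    have hνi₀ : ν i₀ = 1 := mul_right_cancel₀ hui₀ ((hu i₀).trans (one_mul _).symm)
    have honly : ∀ j, j ≠ i₀ → ν j ≤ s := by
      intro j hj
      by_contra hc
      push_neg at hc
      refine sorted_second_two hn ν j i₀ hj ?_ ?_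
      · rw [← hsrepr]; exact hc
      · rw [← hsrepr, hνi₀]; exact hcase
    have huj : ∀ j, j ≠ i₀ → u j = 0 := by
      intro j hj
      by_contra hc
      have h1 : ν j = 1 := mul_right_cancel₀ hc ((hu j).trans (one_mul _).symm)
      have h2 := honly j hj
      rw [h1] at h2
      linarith
    set w : Fin n → ℝ := Vᵀ *ᵥ x with hwdef
    have hw0 : w i₀ = 0 := by
      have hdot : u ⬝ᵥ w = 0 := by
        rw [hudef, hwdef, unitary_dot hVVt]
        simpa [dotProduct] using hx
      have hsingle : u ⬝ᵥ w = u i₀ * w i₀ :=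
        Finset.sum_eq_single i₀ (fun j _ hj => by rw [huj j hj, zero_mul])
          (fun h => absurd (Finset.mem_univ i₀) h)
      rw [hsingle] at hdot
      rcases mul_eq_zero.mp hdot with h | h
      · exact absurd h hui₀
      · exact h
    have hquadx : x ⬝ᵥ (E *ᵥ x) = ∑ j, ν j * (w j * w j) := by
      conv_lhs => rw [spectral_real hEherm]
      rw [unitary_quad]
    rw [hquadx]
    have hwsum : ∑ j, w j * w j = x ⬝ᵥ x := by
      rw [show ∑ j, w j * w j = w ⬝ᵥ w from rfl, hwdef, unitary_dot hVVt]
    calc ∑ j, ν j * (w j * w j) ≤ ∑ j, s * (w j * w j) := by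
          refine Finset.sum_le_sum fun j _ => ?_
          by_cases hj : j = i₀
          · subst hj; rw [hw0]; simp
          · exact mul_le_mul_of_nonneg_right (honly j hj) (mul_self_nonneg _)
      _ = s * (x ⬝ᵥ x) := by rw [← Finset.mul_sum, hwsum]
end

section
/- Let n ≥ 3 and 1 ≤ m ≤ n−1 be integers, let a_1,…,a_n ≥ 0 satisfy Σ_{i=1}^n a_i ≤ 1 with a_i > 0 for at least one i, and let T > 0. Then γ_SP := 1 − Σ_{i=1}^n a_i + λ_{n−1}( Σ_{i=1}^n a_i M_i(T) ) satisfies γ_SP < 1. -/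
open Matrix MeasureTheory ProbabilityTheory

section gammaAux
open Finset

noncomputable def uC (n m : ℕ) (T : ℝ) : ℝ :=
  m * (1 - Real.exp (-((m : ℝ) + 1) * T)) / (((m : ℝ) + 1) * ((n : ℝ) - 1))

noncomputable def wC (n m : ℕ) (T : ℝ) : ℝ :=
  ((m : ℝ) - 1) * ((m : ℝ) + Real.exp (-((m : ℝ) + 1) * T) - ((m : ℝ) + 1) * Real.exp (-T)) /
    (((m : ℝ) + 1) * ((n : ℝ) - 1) * ((n : ℝ) - 2))

lemma Mmat_symm_apply (n m : ℕ) (i : Fin n) (T : ℝ) (k l : Fin n) :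
    Mmat n m i T k l = Mmat n m i T l k := by
  simp only [Mmat, Matrix.of_apply]
  by_cases hk : k = i <;> by_cases hl : l = i <;> by_cases hkl : k = l <;>
    simp_all [eq_comm, or_comm]

lemma Mmat_isHermitian (n m : ℕ) (i : Fin n) (T : ℝ) : (Mmat n m i T).IsHermitian :=
  Matrix.IsHermitian.ext fun k l => by
    rw [star_trivial, Mmat_symm_apply]

section entries
variable {n m : ℕ} (hn : 3 ≤ n) (hm1 : 1 ≤ m) {T : ℝ} {i : Fin n}

lemma hden1 : ((m : ℝ) + 1) ≠ 0 := by positivity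
lemma hden2 (hn : 3 ≤ n) : ((n : ℝ) - 1) ≠ 0 := by
  have : (3 : ℝ) ≤ n := by exact_mod_cast hn
  intro h; linarith
lemma hden3 (hn : 3 ≤ n) : ((n : ℝ) - 2) ≠ 0 := by
  have : (3 : ℝ) ≤ n := by exact_mod_cast hn
  intro h; linarith

lemma B_ii (hn : 3 ≤ n) : (1 - Mmat n m i T) i i = ((n : ℝ) - 1) * uC n m T := by
  simp only [Mmat, Matrix.sub_apply, Matrix.one_apply_eq, Matrix.of_apply, if_pos (⟨rfl, rfl⟩ : i = i ∧ i = i), and_self, if_true, uC]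
  have h1 : ((m : ℝ) + 1) ≠ 0 := hden1
  have h2 := hden2 hn
  field_simp
  ring

lemma B_ik {k : Fin n} (hk : k ≠ i) : (1 - Mmat n m i T) i k = -uC n m T := by
  simp only [Mmat, Matrix.sub_apply, Matrix.of_apply, uC]
  rw [Matrix.one_apply_ne (Ne.symm hk)]
  simp [hk, Ne.symm hk]

lemma B_ki {k : Fin n} (hk : k ≠ i) : (1 - Mmat n m i T) k i = -uC n m T := by
  simp only [Mmat, Matrix.sub_apply, Matrix.of_apply, uC]
  rw [Matrix.one_apply_ne hk]
  simp [hk]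

lemma B_kk (hn : 3 ≤ n) {k : Fin n} (hk : k ≠ i) :
    (1 - Mmat n m i T) k k = uC n m T + ((n : ℝ) - 2) * wC n m T := by
  simp only [Mmat, Matrix.sub_apply, Matrix.one_apply_eq, Matrix.of_apply, uC, wC]
  rw [if_neg (by tauto)]
  simp only [if_true]
  have h1 : ((m : ℝ) + 1) ≠ 0 := hden1
  have h2 := hden2 hn
  have h3 := hden3 hn
  field_simp
  ring

lemma B_kl (hn : 3 ≤ n) {k l : Fin n} (hk : k ≠ i) (hl : l ≠ i) (hkl : k ≠ l) :
    (1 - Mmat n m i T) k l = -wC n m T := by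
  simp only [Mmat, Matrix.sub_apply, Matrix.of_apply, wC]
  rw [Matrix.one_apply_ne hkl]
  rw [if_neg (by tauto), if_neg hkl, if_neg (by tauto)]
  ring

end entries


open Matrix Finset
section
variable {n m : ℕ} {T : ℝ} {i : Fin n}
lemma quad_eq (hn : 3 ≤ n) (i : Fin n) (x : Fin n → ℝ) :
    x ⬝ᵥ ((1 - Mmat n m i T) *ᵥ x) =
      uC n m T * (∑ k ∈ univ.erase i, (x k - x i) ^ 2) +
      wC n m T * (((n : ℝ) - 1) * (∑ k ∈ univ.erase i, (x k) ^ 2) -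
        (∑ k ∈ univ.erase i, x k) ^ 2) := by
  classical
  have B_ii := B_ii (n := n) (m := m) (T := T) (i := i) hn
  have B_ik : ∀ {k : Fin n}, k ≠ i → (1 - Mmat n m i T) i k = -uC n m T := fun hk => B_ik hk
  have B_ki : ∀ {k : Fin n}, k ≠ i → (1 - Mmat n m i T) k i = -uC n m T := fun hk => B_ki hk
  have B_kk : ∀ {k : Fin n}, k ≠ i → (1 - Mmat n m i T) k k = uC n m T + ((n : ℝ) - 2) * wC n m T := fun hk => B_kk hn hk
  have B_kl : ∀ {k l : Fin n}, k ≠ i → l ≠ i → k ≠ l → (1 - Mmat n m i T) k l = -wC n m T := fun h1 h2 h3 => B_kl hn h1 h2 h3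
  set B := (1 - Mmat n m i T) with hB
  set u := uC n m T
  set w := wC n m T
  set E := (univ : Finset (Fin n)).erase i with hE
  set S := ∑ k ∈ E, x k with hS
  set Q := ∑ k ∈ E, (x k) ^ 2 with hQ
  have hcard : (E.card : ℝ) = (n : ℝ) - 1 := by
    rw [hE, Finset.card_erase_of_mem (mem_univ i), Finset.card_univ, Fintype.card_fin]
    have : 1 ≤ n := by omega
    push_cast [Nat.cast_sub this]
    ring
  have hlhs : x ⬝ᵥ (B *ᵥ x) = ∑ k, x k * ∑ l, B k l * x l := by
    simp [dotProduct, Matrix.mulVec]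
  rw [hlhs, ← Finset.add_sum_erase _ _ (Finset.mem_univ i), ← hE]
  have h1 : ∑ l, B i l * x l = ((n : ℝ) - 1) * u * x i - u * S := by
    rw [← Finset.add_sum_erase _ _ (Finset.mem_univ i), ← hE, B_ii]
    rw [Finset.sum_congr rfl (fun l hl => by
      rw [B_ik (Finset.ne_of_mem_erase hl)])]
    simp only [neg_mul, Finset.sum_neg_distrib, ← Finset.mul_sum, ← hS]
    ring
  have h2 : ∀ k ∈ E, x k * ∑ l, B k l * x l =
      -u * x i * x k + (u + ((n : ℝ) - 2) * w) * (x k) ^ 2 - w * S * x k + w * (x k) ^ 2 := by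
    intro k hk
    have hki : k ≠ i := Finset.ne_of_mem_erase hk
    have hinner : ∑ l, B k l * x l =
        -u * x i + (u + ((n : ℝ) - 2) * w) * x k + (-w) * (S - x k) := by
      rw [← Finset.add_sum_erase _ _ (Finset.mem_univ i), ← hE, B_ki hki]
      rw [← Finset.add_sum_erase _ _ hk, B_kk hki]
      rw [Finset.sum_congr rfl (fun l hl => by
        rw [B_kl hki (Finset.ne_of_mem_erase (Finset.mem_of_mem_erase hl))
          (Ne.symm (Finset.ne_of_mem_erase hl))])]
      simp only [neg_mul, Finset.sum_neg_distrib, ← Finset.mul_sum,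
        Finset.sum_erase_eq_sub hk, ← hS]
      ring
    rw [hinner]; ring
  rw [Finset.sum_congr rfl h2, h1]
  have h3 : ∑ k ∈ E, (-u * x i * x k + (u + ((n : ℝ) - 2) * w) * (x k) ^ 2 - w * S * x k
      + w * (x k) ^ 2) =
      -u * x i * S + (u + ((n : ℝ) - 2) * w) * Q - w * S * S + w * Q := by
    simp only [Finset.sum_add_distrib, Finset.sum_sub_distrib, ← Finset.mul_sum, ← hS, ← hQ]
  rw [h3]
  have h4 : ∑ k ∈ E, (x k - x i) ^ 2 = Q - 2 * x i * S + ((n : ℝ) - 1) * (x i) ^ 2 := by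
    have : ∀ k ∈ E, (x k - x i) ^ 2 = (x k) ^ 2 - 2 * x i * x k + (x i) ^ 2 := by
      intro k _; ring
    rw [Finset.sum_congr rfl this]
    simp only [Finset.sum_add_distrib, Finset.sum_sub_distrib, ← Finset.mul_sum, ← hS, ← hQ,
      Finset.sum_const, nsmul_eq_mul, hcard]
  rw [h4]
  ring
end

section pos
variable {n m : ℕ} {T : ℝ}

lemma uC_pos (hn : 3 ≤ n) (hm1 : 1 ≤ m) (hT : 0 < T) : 0 < uC n m T := by
  have hE : Real.exp (-((m : ℝ) + 1) * T) < 1 := by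
    apply Real.exp_lt_one_iff.mpr
    have hm : (0 : ℝ) < (m : ℝ) + 1 := by positivity
    nlinarith
  have h2 : (0:ℝ) < (n : ℝ) - 1 := by
    have : (3 : ℝ) ≤ n := by exact_mod_cast hn
    linarith
  have hm : (0:ℝ) < (m : ℝ) := by exact_mod_cast hm1
  apply div_pos (by nlinarith) (by positivity)

lemma wC_nonneg (hn : 3 ≤ n) (hm1 : 1 ≤ m) (hT : 0 < T) : 0 ≤ wC n m T := by
  have h2 : (0:ℝ) < (n : ℝ) - 1 := by
    have : (3 : ℝ) ≤ n := by exact_mod_cast hn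
    linarith
  have h3 : (0:ℝ) < (n : ℝ) - 2 := by
    have : (3 : ℝ) ≤ n := by exact_mod_cast hn
    linarith
  have hm : (1:ℝ) ≤ (m : ℝ) := by exact_mod_cast hm1
  set F := Real.exp (-T) with hF
  have hFpos : 0 < F := Real.exp_pos _
  have hE : Real.exp (-((m : ℝ) + 1) * T) = F ^ (m + 1) := by
    rw [hF, ← Real.exp_nat_mul]
    congr 1
    push_cast
    ring
  have hbern : 1 + ((m : ℝ) + 1) * (F - 1) ≤ F ^ (m + 1) := by
    have := one_add_mul_le_pow (a := F - 1) (by linarith) (m + 1)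
    have h1F : 1 + (F - 1) = F := by ring
    rw [h1F] at this
    calc 1 + ((m : ℝ) + 1) * (F - 1) = 1 + ((m + 1 : ℕ) : ℝ) * (F - 1) := by push_cast; ring
      _ ≤ F ^ (m + 1) := this
  have hnum : 0 ≤ (m : ℝ) + Real.exp (-((m : ℝ) + 1) * T) - ((m : ℝ) + 1) * F := by
    rw [hE]; nlinarith
  unfold wC
  rw [← hF]
  apply div_nonneg (by nlinarith) (by positivity)

lemma quad_nonneg (hn : 3 ≤ n) (hm1 : 1 ≤ m) (hT : 0 < T) (i : Fin n) (x : Fin n → ℝ) :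
    0 ≤ x ⬝ᵥ ((1 - Mmat n m i T) *ᵥ x) := by
  rw [quad_eq hn i x]
  have hS1 : 0 ≤ ∑ k ∈ Finset.univ.erase i, (x k - x i) ^ 2 :=
    Finset.sum_nonneg fun k _ => sq_nonneg _
  have hS2 : 0 ≤ ((n : ℝ) - 1) * (∑ k ∈ Finset.univ.erase i, (x k) ^ 2) -
      (∑ k ∈ Finset.univ.erase i, x k) ^ 2 := by
    have hcheb := sq_sum_le_card_mul_sum_sq (s := Finset.univ.erase i) (f := x)
    have hcard : ((Finset.univ.erase i).card : ℝ) = (n : ℝ) - 1 := by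
      rw [Finset.card_erase_of_mem (Finset.mem_univ i), Finset.card_univ, Fintype.card_fin]
      have : 1 ≤ n := by omega
      push_cast [Nat.cast_sub this]
      ring
    rw [← hcard]
    exact_mod_cast sub_nonneg.mpr hcheb
  have hu := (uC_pos hn hm1 hT).le
  have hw := wC_nonneg hn hm1 hT
  positivity

lemma quad_zero_const (hn : 3 ≤ n) (hm1 : 1 ≤ m) (hT : 0 < T) (i : Fin n) (x : Fin n → ℝ)
    (hq : x ⬝ᵥ ((1 - Mmat n m i T) *ᵥ x) = 0) : ∀ k, x k = x i := by
  rw [quad_eq hn i x] at hq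
  have hS1 : 0 ≤ ∑ k ∈ Finset.univ.erase i, (x k - x i) ^ 2 :=
    Finset.sum_nonneg fun k _ => sq_nonneg _
  have hS2 : 0 ≤ ((n : ℝ) - 1) * (∑ k ∈ Finset.univ.erase i, (x k) ^ 2) -
      (∑ k ∈ Finset.univ.erase i, x k) ^ 2 := by
    have hcheb := sq_sum_le_card_mul_sum_sq (s := Finset.univ.erase i) (f := x)
    have hcard : ((Finset.univ.erase i).card : ℝ) = (n : ℝ) - 1 := by
      rw [Finset.card_erase_of_mem (Finset.mem_univ i), Finset.card_univ, Fintype.card_fin]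
      have : 1 ≤ n := by omega
      push_cast [Nat.cast_sub this]
      ring
    rw [← hcard]
    exact_mod_cast sub_nonneg.mpr hcheb
  have hu := uC_pos hn hm1 hT
  have hw := wC_nonneg hn hm1 hT
  have hS1z : ∑ k ∈ Finset.univ.erase i, (x k - x i) ^ 2 = 0 := by nlinarith
  have hall := (Finset.sum_eq_zero_iff_of_nonneg (fun k _ => sq_nonneg (x k - x i))).mp hS1z
  intro k
  by_cases hk : k = i
  · rw [hk]
  · have := hall k (Finset.mem_erase.mpr ⟨hk, Finset.mem_univ k⟩)
    have := sq_eq_zero_iff.mp this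
    linarith

end pos

lemma mulVec_finsum {n : ℕ} (D : Fin n → Matrix (Fin n) (Fin n) ℝ) (v : Fin n → ℝ) :
    (∑ i, D i) *ᵥ v = ∑ i, D i *ᵥ v := by
  ext k
  simp only [Matrix.mulVec, dotProduct, Matrix.sum_apply, Finset.sum_apply, Finset.sum_mul]
  exact Finset.sum_comm

lemma dot_finsum {n : ℕ} (v : Fin n → ℝ) (y : Fin n → Fin n → ℝ) :
    v ⬝ᵥ (∑ i, y i) = ∑ i, v ⬝ᵥ y i := by
  simp only [dotProduct, Finset.sum_apply, Finset.mul_sum]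
  exact Finset.sum_comm

lemma dot_sum_smul {n : ℕ} (v : Fin n → ℝ) (C : Fin n → Matrix (Fin n) (Fin n) ℝ)
    (c : Fin n → ℝ) :
    v ⬝ᵥ ((∑ i, c i • C i) *ᵥ v) = ∑ i, c i * (v ⬝ᵥ (C i *ᵥ v)) := by
  rw [mulVec_finsum, dot_finsum]
  exact Finset.sum_congr rfl fun i _ => by
    rw [Matrix.smul_mulVec, dotProduct_smul, smul_eq_mul]


section main
variable {n m : ℕ}

theorem main_thm (hn : 3 ≤ n) (hm1 : 1 ≤ m)
    (a : Fin n → ℝ) (ha : ∀ i, 0 ≤ a i) (hpos : ∃ i, 0 < a i)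
    (T : ℝ) (hT : 0 < T)
    (hA : (∑ i, a i • Mmat n m i T).IsHermitian) :
    ((Finset.univ.val.map hA.eigenvalues).sort (· ≤ ·)).getD (n - 2) 0 < ∑ i, a i := by
  classical
  obtain ⟨i0, hi0⟩ := hpos
  set A := ∑ i, a i • Mmat n m i T with hAdef
  set s := ∑ i, a i with hs
  -- key: eigenvectors with eigenvalue ≥ s are constant
  have key : ∀ j : Fin n, s ≤ hA.eigenvalues j →
      ∀ k, (hA.eigenvectorBasis j) k = (hA.eigenvectorBasis j) i0 := by
    intro j hj
    set v : Fin n → ℝ := ⇑(hA.eigenvectorBasis j) with hv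
    have hmv : A *ᵥ v = hA.eigenvalues j • v := hA.mulVec_eigenvectorBasis j
    have hvv : 0 ≤ v ⬝ᵥ v := Finset.sum_nonneg fun k _ => mul_self_nonneg _
    have hdot1 : v ⬝ᵥ ((s • (1 : Matrix (Fin n) (Fin n) ℝ) - A) *ᵥ v) =
        (s - hA.eigenvalues j) * (v ⬝ᵥ v) := by
      rw [Matrix.sub_mulVec, Matrix.smul_mulVec, Matrix.one_mulVec, hmv,
        dotProduct_sub, dotProduct_smul, dotProduct_smul]
      simp only [smul_eq_mul]
      ring
    have hdecomp : s • (1 : Matrix (Fin n) (Fin n) ℝ) - A = ∑ i, a i • (1 - Mmat n m i T) := by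
      rw [Finset.sum_congr rfl fun i _ => smul_sub (a i) 1 (Mmat n m i T),
        Finset.sum_sub_distrib, ← Finset.sum_smul]
    have hdot2 : v ⬝ᵥ ((s • (1 : Matrix (Fin n) (Fin n) ℝ) - A) *ᵥ v) =
        ∑ i, a i * (v ⬝ᵥ ((1 - Mmat n m i T) *ᵥ v)) := by
      rw [hdecomp, dot_sum_smul]
    have hle : ∑ i, a i * (v ⬝ᵥ ((1 - Mmat n m i T) *ᵥ v)) ≤ 0 := by
      rw [← hdot2, hdot1]
      exact mul_nonpos_of_nonpos_of_nonneg (by linarith) hvv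
    have hterm : ∀ i ∈ Finset.univ, 0 ≤ a i * (v ⬝ᵥ ((1 - Mmat n m i T) *ᵥ v)) :=
      fun i _ => mul_nonneg (ha i) (quad_nonneg hn hm1 hT i v)
    have hzero : ∑ i, a i * (v ⬝ᵥ ((1 - Mmat n m i T) *ᵥ v)) = 0 :=
      le_antisymm hle (Finset.sum_nonneg hterm)
    have hi0z : a i0 * (v ⬝ᵥ ((1 - Mmat n m i0 T) *ᵥ v)) = 0 :=
      (Finset.sum_eq_zero_iff_of_nonneg hterm).mp hzero i0 (Finset.mem_univ i0)
    have hq0 : v ⬝ᵥ ((1 - Mmat n m i0 T) *ᵥ v) = 0 := by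
      rcases mul_eq_zero.mp hi0z with h | h
      · exact absurd h (ne_of_gt hi0)
      · exact h
    exact quad_zero_const hn hm1 hT i0 v hq0
  -- now the sorting argument
  by_contra hcon
  push_neg at hcon
  set l := (Finset.univ.val.map hA.eigenvalues).sort (· ≤ ·) with hl
  have hlen : l.length = n := by
    rw [hl, Multiset.length_sort, Multiset.card_map, ← Finset.card_def, Finset.card_univ,
      Fintype.card_fin]
  have hsorted : l.Pairwise (· ≤ ·) := Multiset.pairwise_sort _ _
  have hn2 : n - 2 < l.length := by omega
  have hget : s ≤ l.get ⟨n - 2, hn2⟩ := by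
    rw [List.getD_eq_getElem (hn := hn2)] at hcon; exact hcon
  have hdropall : ∀ y ∈ l.drop (n - 2), s ≤ y := by
    intro y hy
    obtain ⟨j, hj, hy'⟩ := List.mem_iff_getElem.mp hy
    have hjl : n - 2 + j < l.length := by
      rw [List.length_drop] at hj; omega
    rw [List.getElem_drop] at hy'
    have hle2 : l.get ⟨n - 2, hn2⟩ ≤ l.get ⟨n - 2 + j, hjl⟩ :=
      hsorted.rel_get_of_le (by simp)
    rw [List.get_eq_getElem, List.get_eq_getElem] at hle2
    rw [← hy']
    exact le_trans hget (by simpa using hle2)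
  have hcount : 2 ≤ l.countP (fun y => decide (s ≤ y)) := by
    have hdl : (l.drop (n - 2)).length = 2 := by
      rw [List.length_drop, hlen]; omega
    have hcd : (l.drop (n - 2)).countP (fun y => decide (s ≤ y)) = 2 := by
      rw [List.countP_eq_length.mpr (fun a ha' => decide_eq_true (hdropall a ha')), hdl]
    calc (2 : ℕ) = (l.drop (n - 2)).countP (fun y => decide (s ≤ y)) := hcd.symm
      _ ≤ (l.take (n - 2)).countP (fun y => decide (s ≤ y)) +
          (l.drop (n - 2)).countP (fun y => decide (s ≤ y)) := Nat.le_add_left _ _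
      _ = l.countP (fun y => decide (s ≤ y)) := by
          rw [← List.countP_append, List.take_append_drop]
  have hcard2 : 2 ≤ (Finset.univ.filter (fun j => s ≤ hA.eigenvalues j)).card := by
    have h1 : Multiset.countP (fun y => s ≤ y) (Finset.univ.val.map hA.eigenvalues) =
        l.countP (fun y => decide (s ≤ y)) := by
      conv_lhs => rw [← Multiset.sort_eq (Finset.univ.val.map hA.eigenvalues) (· ≤ ·)]
      rw [Multiset.coe_countP]
    have h2 : Multiset.countP (fun y => s ≤ y) (Finset.univ.val.map hA.eigenvalues) =
        (Finset.univ.filter (fun j => s ≤ hA.eigenvalues j)).card := by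
      rw [Multiset.countP_map, Finset.card_def, Finset.filter_val]
    omega
  obtain ⟨j1, hj1, j2, hj2, hne⟩ := Finset.one_lt_card.mp (lt_of_lt_of_le one_lt_two hcard2)
  rw [Finset.mem_filter] at hj1 hj2
  -- orthonormality contradiction
  have horth := (orthonormal_iff_ite (𝕜 := ℝ)).mp hA.eigenvectorBasis.orthonormal
  have hinner : ∀ j1 j2 : Fin n, (inner ℝ (hA.eigenvectorBasis j1) (hA.eigenvectorBasis j2) : ℝ) =
      ∑ k, (hA.eigenvectorBasis j1) k * (hA.eigenvectorBasis j2) k := by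
    intro j1 j2
    rw [PiLp.inner_apply]
    exact Finset.sum_congr rfl fun k _ => by rw [RCLike.inner_apply, starRingEnd_apply,
      star_trivial, mul_comm]
  set c1 := (hA.eigenvectorBasis j1) i0 with hc1
  set c2 := (hA.eigenvectorBasis j2) i0 with hc2
  have hsum12 : (n : ℝ) * (c1 * c2) = 0 := by
    have h0 := horth j1 j2
    rw [if_neg hne, hinner] at h0
    rw [← h0]
    rw [Finset.sum_congr rfl fun k _ => by rw [key j1 hj1.2 k, key j2 hj2.2 k]]
    simp [Finset.card_univ, mul_comm, hc1, hc2]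
  have hsum11 : (n : ℝ) * (c1 * c1) = 1 := by
    have h0 := horth j1 j1
    rw [if_pos rfl, hinner] at h0
    rw [← h0]
    rw [Finset.sum_congr rfl fun k _ => by rw [key j1 hj1.2 k]]
    simp [Finset.card_univ, mul_comm, hc1]
  rcases mul_eq_zero.mp ((mul_eq_zero.mp hsum12).resolve_left (by
      have : (3:ℝ) ≤ n := by exact_mod_cast hn
      intro h; rw [h] at this; linarith)) with h | h
  · rw [h] at hsum11; simp at hsum11
  · -- c2 = 0, use hsum22
    have hsum22 : (n : ℝ) * (c2 * c2) = 1 := by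
      have h0 := horth j2 j2
      rw [if_pos rfl, hinner] at h0
      rw [← h0]
      rw [Finset.sum_congr rfl fun k _ => by rw [key j2 hj2.2 k]]
      simp [Finset.card_univ, mul_comm, hc2]
    rw [h] at hsum22; simp at hsum22
end main

end gammaAux

/-- `γ_SP = 1 - ∑ᵢ aᵢ + λ_{n-1}(∑ᵢ aᵢ Mᵢ(T)) < 1` whenever the `aᵢ` are
nonnegative, sum to at most `1`, and at least one of them is positive. -/
theorem gammaSP_lt_one (n m : ℕ) (hn : 3 ≤ n) (hm1 : 1 ≤ m) (hm2 : m ≤ n - 1)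
    (a : Fin n → ℝ) (ha : ∀ i, 0 ≤ a i) (hsum : ∑ i, a i ≤ 1) (hpos : ∃ i, 0 < a i)
    (T : ℝ) (hT : 0 < T) :
    1 - ∑ i, a i + sortedEig (∑ i, a i • Mmat n m i T) (n - 2) < 1 := by
  classical
  have hA : (∑ i, a i • Mmat n m i T).IsHermitian := by
    apply Matrix.IsHermitian.ext
    intro k l
    rw [star_trivial]
    simp only [Matrix.sum_apply, Matrix.smul_apply, smul_eq_mul]
    exact Finset.sum_congr rfl fun j _ => by rw [Mmat_symm_apply]
  have h := main_thm hn hm1 a ha hpos T hT hA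
  unfold sortedEig
  rw [dif_pos hA]
  linarith
end
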